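/- arXiv:1701.07345 — 8 statements merged into one kernel-verified Lean document; each statement's English description precedes it below -/
import Mathlib

section
/- Let n ≥ 1 and let U be a continuous group homomorphism from the orthogonal group O(3) to the orthogonal group O(n) (acting by real orthogonal n × n matrices). Let ν be a finite Borel measure on ℝ³ that is invariant under every g ∈ O(3), and let f : ℝ³ → Matrix n n ℝ be a bounded measurable function satisfying f(g p) = U(g) f(p) U(g)ᵀ for all g ∈ O(3) and all p ∈ ℝ³. Then the matrix-valued function B(h) = ∫_{ℝ³} e^{i⟨p,h⟩} f(p) dν(p) satisfies B(g h) = U(g) B(h) U(g)ᵀ for all g ∈ O(3) and all h ∈ ℝ³. -/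
open MeasureTheory Matrix

/-- If `U : O(3) → O(n)` is a continuous homomorphism, `ν` is a
finite `O(3)`-invariant measure on `ℝ³`, and the bounded measurable matrix-valued
density `f` satisfies the equivariance `f(gp) = U(g) f(p) U(g)ᵀ`, then the
matrix-valued function `B(h) = ∫ e^{i⟨p,h⟩} f(p) dν(p)` satisfies
`B(gh) = U(g) B(h) U(g)ᵀ` (isotropy of the correlation tensor). -/
theorem isotropy_of_equivariant_spectral_density
    (n : ℕ) (hn : 1 ≤ n)
    (U : Matrix.orthogonalGroup (Fin 3) ℝ →* Matrix.orthogonalGroup (Fin n) ℝ)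
    (hUcont : Continuous fun g => U g)
    (ν : Measure (EuclideanSpace ℝ (Fin 3))) [IsFiniteMeasure ν]
    (hνinv : ∀ g : Matrix.orthogonalGroup (Fin 3) ℝ,
      Measure.map (fun p => Matrix.toEuclideanLin (g : Matrix (Fin 3) (Fin 3) ℝ) p) ν = ν)
    (f : EuclideanSpace ℝ (Fin 3) → Matrix (Fin n) (Fin n) ℝ)
    (hfmeas : ∀ i j, Measurable fun p => f p i j)
    (hfbdd : ∃ C : ℝ, ∀ p i j, |f p i j| ≤ C)
    (hfequiv : ∀ (g : Matrix.orthogonalGroup (Fin 3) ℝ) (p : EuclideanSpace ℝ (Fin 3)),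
      f (Matrix.toEuclideanLin (g : Matrix (Fin 3) (Fin 3) ℝ) p) =
        (U g : Matrix (Fin n) (Fin n) ℝ) * f p * (U g : Matrix (Fin n) (Fin n) ℝ)ᵀ)
    (B : EuclideanSpace ℝ (Fin 3) → Matrix (Fin n) (Fin n) ℂ)
    (hB : ∀ h i j, B h i j =
      ∫ p, Complex.exp (Complex.I * ((inner ℝ p h : ℝ) : ℂ)) * (f p i j : ℂ) ∂ν) :
    ∀ (g : Matrix.orthogonalGroup (Fin 3) ℝ) (h : EuclideanSpace ℝ (Fin 3)),
      B (Matrix.toEuclideanLin (g : Matrix (Fin 3) (Fin 3) ℝ) h) =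
        ((U g : Matrix (Fin n) (Fin n) ℝ).map (fun t => (t : ℂ))) * B h *
          ((U g : Matrix (Fin n) (Fin n) ℝ).map (fun t => (t : ℂ)))ᵀ := by
  intro g h
  obtain ⟨C, hC⟩ := hfbdd
  set A : Matrix (Fin 3) (Fin 3) ℝ := (g : Matrix (Fin 3) (Fin 3) ℝ) with hA
  set M : Matrix (Fin n) (Fin n) ℝ := (U g : Matrix (Fin n) (Fin n) ℝ) with hM
  set T : EuclideanSpace ℝ (Fin 3) → EuclideanSpace ℝ (Fin 3) :=
    fun p => Matrix.toEuclideanLin A p with hT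
  have hTcont : Continuous T := (Matrix.toEuclideanLin A).continuous_of_finiteDimensional
  have hTmeas : Measurable T := hTcont.measurable
  -- inner product preservation
  have hinner : ∀ p : EuclideanSpace ℝ (Fin 3), (inner ℝ (T p) (T h) : ℝ) = inner ℝ p h := by
    intro p
    have hg : Aᵀ * A = 1 := by
      have := g.prop
      rw [Matrix.mem_orthogonalGroup_iff'] at this
      exact this
    simp only [hT, Matrix.toEuclideanLin_apply, PiLp.inner_apply, RCLike.inner_apply,
      conj_trivial]
    have e : ∀ x y : Fin 3 → ℝ, (∑ i, x i * y i) = x ⬝ᵥ y := fun _ _ => rfl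
    rw [e, e]
    change (A *ᵥ _) ⬝ᵥ (A *ᵥ _) = _
    rw [Matrix.dotProduct_mulVec, ← Matrix.mulVec_transpose, Matrix.mulVec_mulVec, hg,
      Matrix.one_mulVec]
  -- measurability and integrability of integrands
  have hexp : ∀ x : EuclideanSpace ℝ (Fin 3), Measurable fun p : EuclideanSpace ℝ (Fin 3) =>
      Complex.exp (Complex.I * ((inner ℝ p x : ℝ) : ℂ)) := fun x =>
    (Complex.continuous_exp.comp
      (continuous_const.mul (Complex.continuous_ofReal.comp
        (continuous_id.inner continuous_const)))).measurable
  have hnorm : ∀ (x p : EuclideanSpace ℝ (Fin 3)) (k l : Fin n),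
      ‖Complex.exp (Complex.I * ((inner ℝ p x : ℝ) : ℂ)) * (f p k l : ℂ)‖ ≤ C := by
    intro x p k l
    rw [norm_mul, mul_comm Complex.I,
      Complex.norm_exp_ofReal_mul_I, one_mul, Complex.norm_real, Real.norm_eq_abs]
    exact hC p k l
  have hint : ∀ (x : EuclideanSpace ℝ (Fin 3)) (k l : Fin n),
      Integrable (fun p => Complex.exp (Complex.I * ((inner ℝ p x : ℝ) : ℂ)) * (f p k l : ℂ)) ν := by
    intro x k l
    refine Integrable.mono' (integrable_const C) ?_ (Filter.Eventually.of_forall fun p => hnorm x p k l)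
    exact ((hexp x).mul (Complex.measurable_ofReal.comp (hfmeas k l))).aestronglyMeasurable
  ext i j
  rw [hB]
  -- change of variables using invariance of ν
  have step1 : (∫ p, Complex.exp (Complex.I * ((inner ℝ p (T h) : ℝ) : ℂ)) * (f p i j : ℂ) ∂ν)
      = ∫ p, Complex.exp (Complex.I * ((inner ℝ p h : ℝ) : ℂ)) * (((M * f p * Mᵀ) i j : ℝ) : ℂ) ∂ν := by
    conv_lhs => rw [← hνinv g]
    rw [MeasureTheory.integral_map hTmeas.aemeasurable]
    · refine integral_congr_ae (Filter.Eventually.of_forall fun p => ?_)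
      show Complex.exp (Complex.I * ((inner ℝ (T p) (T h) : ℝ) : ℂ)) * (f (T p) i j : ℂ) = _
      rw [hinner p, show f (T p) = M * f p * Mᵀ from hfequiv g p]
    · rw [hνinv g]
      exact ((hexp (T h)).mul (Complex.measurable_ofReal.comp (hfmeas i j))).aestronglyMeasurable
  rw [step1]
  -- expand the matrix product and push sums through the integral
  have expand : ∀ p : EuclideanSpace ℝ (Fin 3),
      Complex.exp (Complex.I * ((inner ℝ p h : ℝ) : ℂ)) * (((M * f p * Mᵀ) i j : ℝ) : ℂ)
        = ∑ l : Fin n, ∑ k : Fin n, (M i k : ℂ) * (M j l : ℂ) *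
            (Complex.exp (Complex.I * ((inner ℝ p h : ℝ) : ℂ)) * (f p k l : ℂ)) := by
    intro p
    simp only [Matrix.mul_apply, Matrix.transpose_apply]
    push_cast
    rw [Finset.mul_sum]
    refine Finset.sum_congr rfl fun l _ => ?_
    rw [Finset.sum_mul, Finset.mul_sum]
    refine Finset.sum_congr rfl fun k _ => ?_
    ring
  simp only [expand]
  rw [MeasureTheory.integral_finset_sum _ fun l _ =>
    MeasureTheory.integrable_finset_sum _ fun k _ => ((hint h k l).const_mul _)]
  have inner_sum : ∀ l : Fin n,
      (∫ p, ∑ k : Fin n, (M i k : ℂ) * (M j l : ℂ) *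
          (Complex.exp (Complex.I * ((inner ℝ p h : ℝ) : ℂ)) * (f p k l : ℂ)) ∂ν)
        = ∑ k : Fin n, (M i k : ℂ) * (M j l : ℂ) * B h k l := by
    intro l
    rw [MeasureTheory.integral_finset_sum _ fun k _ => ((hint h k l).const_mul _)]
    refine Finset.sum_congr rfl fun k _ => ?_
    rw [MeasureTheory.integral_const_mul, hB h k l]
  simp only [inner_sum]
  -- compare with the RHS entry
  simp only [Matrix.mul_apply, Matrix.transpose_apply, Matrix.map_apply]
  refine Finset.sum_congr rfl fun l _ => ?_
  rw [Finset.sum_mul]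
  refine Finset.sum_congr rfl fun k _ => ?_
  ring
end

section
/- Let m ≥ 2, let ν_1,…,ν_m > 0, σ_1,…,σ_m > 0, a > 0, and let β be a real symmetric positive semidefinite m × m matrix with β_{ii} = 1 for all i. Set ν_{ij} = (ν_i + ν_j)/2 and b_{ij} = β_{ij} [Γ(ν_i + 3/2) Γ(ν_j + 3/2) / (Γ(ν_i) Γ(ν_j))]^{1/2} · Γ(ν_{ij}) / Γ(ν_{ij} + 3/2) for all 1 ≤ i, j ≤ m (so b_{ii} = 1). Then for every λ ≥ 0, the m × m matrix with entries f_{ij}(λ) = b_{ij} σ_i σ_j Γ(ν_{ij} + 3/2) a^{2ν_{ij}} / (2 π^{3/2} (a² + λ²)^{ν_{ij} + 3/2}) is positive semidefinite. -/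
open Matrix Real MeasureTheory Set

lemma aux_psd (m : ℕ) (ν : Fin m → ℝ) (hν : ∀ i, 0 < ν i)
    (β : Matrix (Fin m) (Fin m) ℝ) (hβ : β.PosSemidef) (d : Fin m → ℝ) :
    (Matrix.of (fun i j => β i j * Real.Gamma ((ν i + ν j) / 2) * d i * d j) :
      Matrix (Fin m) (Fin m) ℝ).PosSemidef := by
  rw [Matrix.posSemidef_iff_dotProduct_mulVec]
  constructor
  · ext i j
    simp only [conjTranspose_apply, Matrix.of_apply, star_trivial]
    have hb : β j i = β i j := by
      have := congrFun (congrFun hβ.1 i) j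
      simpa [Matrix.conjTranspose_apply] using this
    rw [hb, add_comm (ν j)]
    ring
  · intro x
    have hstar : (star x : Fin m → ℝ) = x := by ext i; simp
    have hquad : star x ⬝ᵥ (Matrix.of (fun i j => β i j * Real.Gamma ((ν i + ν j) / 2) * d i * d j) :
        Matrix (Fin m) (Fin m) ℝ).mulVec x
        = ∑ i, ∑ j, (x i * d i) * (x j * d j) * β i j * Real.Gamma ((ν i + ν j) / 2) := by
      rw [hstar]
      simp only [dotProduct, mulVec, Matrix.of_apply, Finset.mul_sum]
      exact Finset.sum_congr rfl fun i _ => Finset.sum_congr rfl fun j _ => by ring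
    rw [hquad]
    have hint : ∀ i j : Fin m, IntegrableOn
        (fun t : ℝ => (x i * d i) * (x j * d j) * β i j *
          (Real.exp (-t) * t ^ ((ν i + ν j) / 2 - 1))) (Ioi 0) :=
      fun i j => (Real.GammaIntegral_convergent (by have := hν i; have := hν j; positivity)).const_mul _
    have hGamma : ∀ i j : Fin m, Real.Gamma ((ν i + ν j) / 2)
        = ∫ t in Ioi (0:ℝ), Real.exp (-t) * t ^ ((ν i + ν j) / 2 - 1) :=
      fun i j => Real.Gamma_eq_integral (by have := hν i; have := hν j; positivity)
    calc ∑ i, ∑ j, (x i * d i) * (x j * d j) * β i j * Real.Gamma ((ν i + ν j) / 2)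
        = ∫ t in Ioi (0:ℝ), ∑ i, ∑ j, (x i * d i) * (x j * d j) * β i j *
            (Real.exp (-t) * t ^ ((ν i + ν j) / 2 - 1)) := by
          rw [integral_finset_sum _ (fun i _ => integrable_finset_sum _ (fun j _ => hint i j))]
          refine Finset.sum_congr rfl fun i _ => ?_
          rw [integral_finset_sum _ (fun j _ => hint i j)]
          refine Finset.sum_congr rfl fun j _ => ?_
          rw [hGamma i j, ← MeasureTheory.integral_const_mul]
      _ ≥ 0 := by
          refine le_of_eq_of_le rfl (setIntegral_nonneg measurableSet_Ioi fun t ht => ?_)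
          have ht' : (0:ℝ) < t := ht
          have hsplit : ∀ i j : Fin m, t ^ ((ν i + ν j) / 2 - 1)
              = t ^ ((ν i - 1) / 2) * t ^ ((ν j - 1) / 2) := by
            intro i j
            rw [← Real.rpow_add ht']
            ring_nf
          have hz := hβ.dotProduct_mulVec_nonneg (fun i => x i * d i * t ^ ((ν i - 1) / 2))
          have hzs : (star (fun i => x i * d i * t ^ ((ν i - 1) / 2)) : Fin m → ℝ)
              = fun i => x i * d i * t ^ ((ν i - 1) / 2) := by ext i; simp
          rw [hzs] at hz
          simp only [dotProduct, mulVec, Finset.mul_sum] at hz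
          calc (0:ℝ) ≤ Real.exp (-t) * ∑ i, ∑ j, (x i * d i * t ^ ((ν i - 1) / 2)) *
                (β i j * (x j * d j * t ^ ((ν j - 1) / 2))) :=
              mul_nonneg (Real.exp_nonneg _) hz
            _ = ∑ i, ∑ j, (x i * d i) * (x j * d j) * β i j *
                (Real.exp (-t) * t ^ ((ν i + ν j) / 2 - 1)) := by
              rw [Finset.mul_sum]
              refine Finset.sum_congr rfl fun i _ => ?_
              rw [Finset.mul_sum]
              refine Finset.sum_congr rfl fun j _ => ?_
              rw [hsplit i j]; ring

/-- Validity of the parsimonious multivariate Matérn model: with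
`ν_{ij} = (ν_i + ν_j)/2`, a common scale `a`, and the stated co-location
coefficients `b_{ij}`, the matrix of Matérn spectral densities is positive
semidefinite at every wavenumber `λ ≥ 0`. -/
theorem parsimonious_matern_valid
    (m : ℕ) (hm : 2 ≤ m)
    (ν σ : Fin m → ℝ) (hν : ∀ i, 0 < ν i) (hσ : ∀ i, 0 < σ i)
    (a : ℝ) (ha : 0 < a)
    (β : Matrix (Fin m) (Fin m) ℝ) (hβsym : β.IsSymm) (hβpsd : β.PosSemidef)
    (hβdiag : ∀ i, β i i = 1)
    (b : Fin m → Fin m → ℝ)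
    (hb : ∀ i j, b i j = β i j *
      Real.sqrt (Real.Gamma (ν i + 3/2) * Real.Gamma (ν j + 3/2) /
        (Real.Gamma (ν i) * Real.Gamma (ν j))) *
      (Real.Gamma ((ν i + ν j) / 2) / Real.Gamma ((ν i + ν j) / 2 + 3/2))) :
    ∀ l : ℝ, 0 ≤ l →
      (Matrix.of (fun i j =>
        b i j * σ i * σ j * Real.Gamma ((ν i + ν j) / 2 + 3/2) *
          a ^ (2 * ((ν i + ν j) / 2)) /
          (2 * Real.pi ^ ((3 : ℝ) / 2) *
            (a ^ 2 + l ^ 2) ^ ((ν i + ν j) / 2 + 3/2)) :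
        Matrix (Fin m) (Fin m) ℝ)).PosSemidef := by
  intro l hl
  have hr : (0:ℝ) < a ^ 2 + l ^ 2 := by positivity
  set D : Fin m → ℝ := fun i => σ i * Real.sqrt (Real.Gamma (ν i + 3/2) / Real.Gamma (ν i)) *
      a ^ ν i * (a ^ 2 + l ^ 2) ^ (-(ν i / 2 + 3 / 4)) *
      (Real.sqrt (2 * Real.pi ^ ((3:ℝ) / 2)))⁻¹ with hD
  have key : (Matrix.of (fun i j =>
        b i j * σ i * σ j * Real.Gamma ((ν i + ν j) / 2 + 3/2) *
          a ^ (2 * ((ν i + ν j) / 2)) /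
          (2 * Real.pi ^ ((3 : ℝ) / 2) *
            (a ^ 2 + l ^ 2) ^ ((ν i + ν j) / 2 + 3/2)) :
        Matrix (Fin m) (Fin m) ℝ))
      = Matrix.of (fun i j => β i j * Real.Gamma ((ν i + ν j) / 2) * D i * D j) := by
    ext i j
    simp only [Matrix.of_apply, hD]
    have hΓ' : (0:ℝ) < Real.Gamma ((ν i + ν j) / 2 + 3/2) :=
      Real.Gamma_pos_of_pos (by have := hν i; have := hν j; positivity)
    have hC : (0:ℝ) < 2 * Real.pi ^ ((3:ℝ)/2) := by positivity
    have hR : (0:ℝ) < (a ^ 2 + l ^ 2) ^ ((ν i + ν j) / 2 + 3/2) := Real.rpow_pos_of_pos hr _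
    have hrr : ((a ^ 2 + l ^ 2):ℝ) ^ (-(ν i / 2 + 3 / 4)) * (a ^ 2 + l ^ 2) ^ (-(ν j / 2 + 3 / 4))
        = ((a ^ 2 + l ^ 2) ^ ((ν i + ν j) / 2 + 3/2))⁻¹ := by
      rw [← Real.rpow_add hr,
        show -(ν i / 2 + 3 / 4) + -(ν j / 2 + 3 / 4) = -((ν i + ν j) / 2 + 3/2) from by ring,
        Real.rpow_neg hr.le]
    have hss : (Real.sqrt (2 * Real.pi ^ ((3:ℝ)/2)))⁻¹ * (Real.sqrt (2 * Real.pi ^ ((3:ℝ)/2)))⁻¹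
        = (2 * Real.pi ^ ((3:ℝ)/2))⁻¹ := by
      rw [← mul_inv, Real.mul_self_sqrt hC.le]
    have hdd : (σ i * Real.sqrt (Real.Gamma (ν i + 3/2) / Real.Gamma (ν i)) *
          a ^ ν i * (a ^ 2 + l ^ 2) ^ (-(ν i / 2 + 3 / 4)) *
          (Real.sqrt (2 * Real.pi ^ ((3:ℝ) / 2)))⁻¹) *
        (σ j * Real.sqrt (Real.Gamma (ν j + 3/2) / Real.Gamma (ν j)) *
          a ^ ν j * (a ^ 2 + l ^ 2) ^ (-(ν j / 2 + 3 / 4)) *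
          (Real.sqrt (2 * Real.pi ^ ((3:ℝ) / 2)))⁻¹)
        = σ i * σ j * Real.sqrt (Real.Gamma (ν i + 3/2) / Real.Gamma (ν i)) *
          Real.sqrt (Real.Gamma (ν j + 3/2) / Real.Gamma (ν j)) * (a ^ ν i * a ^ ν j) *
          ((a ^ 2 + l ^ 2) ^ ((ν i + ν j) / 2 + 3/2))⁻¹ * (2 * Real.pi ^ ((3:ℝ) / 2))⁻¹ := by
      calc _ = σ i * σ j * Real.sqrt (Real.Gamma (ν i + 3/2) / Real.Gamma (ν i)) *
            Real.sqrt (Real.Gamma (ν j + 3/2) / Real.Gamma (ν j)) * (a ^ ν i * a ^ ν j) *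
            ((a ^ 2 + l ^ 2) ^ (-(ν i / 2 + 3 / 4)) * (a ^ 2 + l ^ 2) ^ (-(ν j / 2 + 3 / 4))) *
            ((Real.sqrt (2 * Real.pi ^ ((3:ℝ) / 2)))⁻¹ *
              (Real.sqrt (2 * Real.pi ^ ((3:ℝ) / 2)))⁻¹) := by ring
        _ = _ := by rw [hrr, hss]
    rw [hb i j,
      show Real.Gamma (ν i + 3/2) * Real.Gamma (ν j + 3/2) /
          (Real.Gamma (ν i) * Real.Gamma (ν j))
        = (Real.Gamma (ν i + 3/2) / Real.Gamma (ν i)) *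
          (Real.Gamma (ν j + 3/2) / Real.Gamma (ν j)) from (div_mul_div_comm _ _ _ _).symm,
      Real.sqrt_mul (le_of_lt (div_pos
        (Real.Gamma_pos_of_pos (by have := hν i; positivity))
        (Real.Gamma_pos_of_pos (hν i)))),
      show (2:ℝ) * ((ν i + ν j) / 2) = ν i + ν j from by ring,
      Real.rpow_add ha, mul_assoc (β i j * Real.Gamma ((ν i + ν j) / 2)), hdd]
    rw [show β i j * (Real.sqrt (Real.Gamma (ν i + 3/2) / Real.Gamma (ν i)) *
          Real.sqrt (Real.Gamma (ν j + 3/2) / Real.Gamma (ν j))) *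
        (Real.Gamma ((ν i + ν j) / 2) / Real.Gamma ((ν i + ν j) / 2 + 3/2)) *
        σ i * σ j * Real.Gamma ((ν i + ν j) / 2 + 3/2)
      = β i j * (Real.sqrt (Real.Gamma (ν i + 3/2) / Real.Gamma (ν i)) *
          Real.sqrt (Real.Gamma (ν j + 3/2) / Real.Gamma (ν j))) *
        Real.Gamma ((ν i + ν j) / 2) * σ i * σ j from by
      have h := div_mul_cancel₀ (Real.Gamma ((ν i + ν j) / 2)) hΓ'.ne'
      linear_combination (β i j * (Real.sqrt (Real.Gamma (ν i + 3/2) / Real.Gamma (ν i)) *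
        Real.sqrt (Real.Gamma (ν j + 3/2) / Real.Gamma (ν j))) * σ i * σ j) * h]
    rw [div_eq_mul_inv, mul_inv]
    ring
  rw [key]
  exact aux_psd m ν hν β hβpsd D
end

section
/- Let m ≥ 1, let a > 0, let (ν_{ij}) be a real symmetric m × m matrix with ν_{ij} > 0 for all i, j such that (ν_{ij}) is conditionally negative definite, and let (σ_{ij}) be a real symmetric m × m matrix such that the matrix with entries σ_{ij} Γ(ν_{ij} + 3/2)/Γ(ν_{ij}) is positive semidefinite. Then for every λ ≥ 0, the m × m matrix with entries σ_{ij} a^{2ν_{ij}} Γ(ν_{ij} + 3/2)/Γ(ν_{ij}) · (a² + λ²)^{−(ν_{ij} + 3/2)} is positive semidefinite. -/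
open Matrix Real
open scoped Nat

/-- A symmetric real matrix `Θ` is conditionally negative definite if
`∑_{i,j} c_i c_j Θ_{ij} ≤ 0` whenever `∑_i c_i = 0`. -/
def CondNegDef {m : ℕ} (Θ : Matrix (Fin m) (Fin m) ℝ) : Prop :=
  ∀ c : Fin m → ℝ, (∑ i, c i) = 0 → (∑ i, ∑ j, c i * c j * Θ i j) ≤ 0

/-- Nonnegative quadratic form (scalar version of positive semidefiniteness). -/
def QF {m : ℕ} (A : Matrix (Fin m) (Fin m) ℝ) : Prop :=
  ∀ c : Fin m → ℝ, 0 ≤ ∑ i, ∑ j, c i * c j * A i j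

lemma dsum_add {m : ℕ} (f g : Fin m → Fin m → ℝ) :
    ∑ i, ∑ j, (f i j + g i j) = (∑ i, ∑ j, f i j) + ∑ i, ∑ j, g i j := by
  simp [Finset.sum_add_distrib]

lemma dsum_sub {m : ℕ} (f g : Fin m → Fin m → ℝ) :
    ∑ i, ∑ j, (f i j - g i j) = (∑ i, ∑ j, f i j) - ∑ i, ∑ j, g i j := by
  simp [Finset.sum_sub_distrib]

lemma dsum_mul {m : ℕ} (r : ℝ) (f : Fin m → Fin m → ℝ) :
    ∑ i, ∑ j, r * f i j = r * ∑ i, ∑ j, f i j := by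
  simp [Finset.mul_sum]

lemma dsum_prod {m : ℕ} (f g : Fin m → ℝ) :
    ∑ i, ∑ j, f i * g j = (∑ i, f i) * (∑ j, g j) :=
  (Finset.sum_mul_sum _ _ _ _).symm

lemma posSemidef_qf {m : ℕ} {A : Matrix (Fin m) (Fin m) ℝ} (hA : A.PosSemidef) : QF A := by
  intro c
  have := hA.dotProduct_mulVec_nonneg c
  simpa [star_trivial, dotProduct, mulVec, Finset.mul_sum, mul_comm, mul_assoc, mul_left_comm] using this

lemma qf_posSemidef {m : ℕ} {A : Matrix (Fin m) (Fin m) ℝ}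
    (hsym : ∀ i j, A i j = A j i) (hA : QF A) : A.PosSemidef := by
  refine Matrix.PosSemidef.of_dotProduct_mulVec_nonneg ?_ ?_
  · ext i j
    simp [conjTranspose, Matrix.transpose_apply, hsym i j]
  · intro x
    have := hA x
    simpa [star_trivial, dotProduct, mulVec, Finset.mul_sum, mul_comm, mul_assoc, mul_left_comm] using this

/-- Schur product theorem, quadratic-form version. -/
lemma qf_mul_posSemidef {m : ℕ} {A B : Matrix (Fin m) (Fin m) ℝ}
    (hA : QF A) (hB : B.PosSemidef) : QF (fun i j => A i j * B i j) := by
  open scoped MatrixOrder in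
  obtain ⟨M, hM⟩ := CStarAlgebra.nonneg_iff_eq_star_mul_self.mp hB.nonneg
  rw [Matrix.star_eq_conjTranspose] at hM
  subst hM
  intro c
  have hentry : ∀ i j, (Mᴴ * M) i j = ∑ k, M k i * M k j := by
    intro i j
    simp [Matrix.mul_apply, conjTranspose]
  calc (0:ℝ) ≤ ∑ k, ∑ i, ∑ j, (c i * M k i) * (c j * M k j) * A i j :=
        Finset.sum_nonneg fun k _ => hA (fun i => c i * M k i)
    _ = ∑ i, ∑ j, c i * c j * (A i j * (Mᴴ * M) i j) := by
        rw [Finset.sum_comm]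
        refine Finset.sum_congr rfl fun i _ => ?_
        rw [Finset.sum_comm]
        refine Finset.sum_congr rfl fun j _ => ?_
        rw [hentry, Finset.mul_sum, Finset.mul_sum]
        exact Finset.sum_congr rfl fun k _ => by ring

/-- Entrywise (Hadamard) powers of a PSD matrix have nonnegative quadratic form. -/
lemma qf_pow {m : ℕ} {B : Matrix (Fin m) (Fin m) ℝ} (hB : B.PosSemidef) (n : ℕ) :
    QF (fun i j => B i j ^ n) := by
  induction n with
  | zero =>
      intro c
      simp only [pow_zero, mul_one]
      rw [dsum_prod c c]
      exact mul_self_nonneg _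
  | succ n ih =>
      intro c
      have h := qf_mul_posSemidef ih hB c
      calc (0:ℝ) ≤ ∑ i, ∑ j, c i * c j * (B i j ^ n * B i j) := h
        _ = ∑ i, ∑ j, c i * c j * B i j ^ (n + 1) := by
            refine Finset.sum_congr rfl fun i _ => Finset.sum_congr rfl fun j _ => ?_
            rw [pow_succ]

/-- Entrywise exponential of a PSD matrix has nonnegative quadratic form. -/
lemma qf_exp {m : ℕ} {B : Matrix (Fin m) (Fin m) ℝ} (hB : B.PosSemidef) :
    QF (fun i j => Real.exp (B i j)) := by
  intro c
  have hexp : ∀ x : ℝ, Real.exp x = ∑' n : ℕ, x ^ n / n ! := by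
    intro x
    rw [Real.exp_eq_exp_ℝ, NormedSpace.exp_eq_tsum_div]
  have hsum : ∀ (i j : Fin m), Summable (fun n : ℕ => c i * c j * (B i j ^ n / n !)) :=
    fun i j => (Real.summable_pow_div_factorial (B i j)).mul_left _
  have key : ∑ i, ∑ j, c i * c j * Real.exp (B i j)
      = ∑' n : ℕ, ∑ i, ∑ j, c i * c j * (B i j ^ n / n !) := by
    rw [eq_comm, Summable.tsum_finsetSum (fun i _ => summable_sum fun j _ => hsum i j)]
    refine Finset.sum_congr rfl fun i _ => ?_
    rw [Summable.tsum_finsetSum (fun j _ => hsum i j)]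
    refine Finset.sum_congr rfl fun j _ => ?_
    rw [tsum_mul_left, ← hexp]
  rw [key]
  refine tsum_nonneg fun n => ?_
  have h := qf_pow hB n c
  have heq : ∑ i, ∑ j, c i * c j * (B i j ^ n / n !)
      = (∑ i, ∑ j, c i * c j * B i j ^ n) / n ! := by
    rw [Finset.sum_div]
    refine Finset.sum_congr rfl fun i _ => ?_
    rw [Finset.sum_div]
    exact Finset.sum_congr rfl fun j _ => by ring
  rw [heq]
  positivity

/-- Schoenberg: the entrywise exponential `exp (-r Θ)` of a conditionally negative
definite symmetric matrix has nonnegative quadratic form, for `r ≥ 0`. -/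
lemma qf_exp_neg_cnd {m : ℕ} (hm : 1 ≤ m) {Θ : Matrix (Fin m) (Fin m) ℝ}
    (hsym : ∀ i j, Θ i j = Θ j i) (hΘ : CondNegDef Θ) {r : ℝ} (hr : 0 ≤ r) :
    QF (fun i j => Real.exp (-(r * Θ i j))) := by
  have i0 : Fin m := ⟨0, hm⟩
  set K : Matrix (Fin m) (Fin m) ℝ :=
    fun i j => r * (Θ i i0 + Θ i0 j - Θ i j - Θ i0 i0) with hK
  have hKsym : ∀ i j, K i j = K j i := by
    intro i j; simp only [hK]; rw [hsym i i0, hsym i0 j, hsym i j]; ring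
  have hKpsd : K.PosSemidef := by
    refine qf_posSemidef hKsym ?_
    intro c
    set e : Fin m → ℝ := fun i => if i = i0 then 1 else 0 with he
    have hesum : ∀ h : Fin m → ℝ, ∑ i, e i * h i = h i0 := by
      intro h
      simp [he, ite_mul, Finset.sum_ite_eq']
    set s : ℝ := ∑ i, c i with hs
    set c' : Fin m → ℝ := fun i => c i - s * e i with hc'
    have hc'sum : ∑ i, c' i = 0 := by
      have h2 : ∑ i, s * e i = s := by
        simp [he, mul_ite, Finset.sum_ite_eq']
      simp only [hc', Finset.sum_sub_distrib]
      rw [← hs, h2, sub_self]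
    have hneg := hΘ c' hc'sum
    -- abbreviations
    have h1 : ∑ i, ∑ j, c i * c j * K i j
        = r * ((∑ i, c i * Θ i i0) * (∑ j, c j))
          + r * ((∑ i, c i) * (∑ j, c j * Θ i0 j))
          - r * (∑ i, ∑ j, c i * c j * Θ i j)
          - (r * Θ i0 i0) * ((∑ i, c i) * (∑ j, c j)) := by
      calc ∑ i, ∑ j, c i * c j * K i j
          = ∑ i, ∑ j, (r * ((c i * Θ i i0) * c j) + r * (c i * (c j * Θ i0 j))
              - r * (c i * c j * Θ i j) - (r * Θ i0 i0) * (c i * c j)) :=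
            Finset.sum_congr rfl fun i _ => Finset.sum_congr rfl fun j _ => by
              simp only [hK]; ring
        _ = _ := by
            rw [dsum_sub, dsum_sub, dsum_add, dsum_mul, dsum_mul, dsum_mul, dsum_mul,
              dsum_prod, dsum_prod, dsum_prod]
    have h2 : ∑ i, ∑ j, c' i * c' j * Θ i j
        = (∑ i, ∑ j, c i * c j * Θ i j)
          - s * (∑ i, c i * Θ i i0)
          - s * (∑ j, c j * Θ i0 j)
          + (s * s) * Θ i0 i0 := by
      calc ∑ i, ∑ j, c' i * c' j * Θ i j
          = ∑ i, ∑ j, (c i * c j * Θ i j - s * (e j * (c i * Θ i j))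
              - s * (e i * (c j * Θ i j)) + (s * s) * (e i * (e j * Θ i j))) :=
            Finset.sum_congr rfl fun i _ => Finset.sum_congr rfl fun j _ => by
              simp only [hc']; ring
        _ = (∑ i, ∑ j, c i * c j * Θ i j)
              - s * (∑ i, ∑ j, e j * (c i * Θ i j))
              - s * (∑ i, ∑ j, e i * (c j * Θ i j))
              + (s * s) * (∑ i, ∑ j, e i * (e j * Θ i j)) := by
            rw [dsum_add, dsum_sub, dsum_sub, dsum_mul, dsum_mul, dsum_mul]
        _ = _ := by
            have hA : ∑ i, ∑ j, e j * (c i * Θ i j) = ∑ i, c i * Θ i i0 := by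
              refine Finset.sum_congr rfl fun i _ => ?_
              exact hesum (fun j => c i * Θ i j)
            have hB2 : ∑ i, ∑ j, e i * (c j * Θ i j) = ∑ j, c j * Θ i0 j := by
              have : ∑ i, e i * (∑ j, c j * Θ i j) = ∑ j, c j * Θ i0 j :=
                hesum (fun i => ∑ j, c j * Θ i j)
              rw [← this]
              exact Finset.sum_congr rfl fun i _ => by rw [Finset.mul_sum]
            have hC : ∑ i, ∑ j, e i * (e j * Θ i j) = Θ i0 i0 := by
              have step : ∑ i, e i * (∑ j, e j * Θ i j) = ∑ j, e j * Θ i0 j :=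
                hesum (fun i => ∑ j, e j * Θ i j)
              have step2 : ∑ j, e j * Θ i0 j = Θ i0 i0 := hesum (fun j => Θ i0 j)
              calc ∑ i, ∑ j, e i * (e j * Θ i j)
                  = ∑ i, e i * (∑ j, e j * Θ i j) :=
                    Finset.sum_congr rfl fun i _ => by rw [Finset.mul_sum]
                _ = Θ i0 i0 := by rw [step, step2]
            rw [hA, hB2, hC]
    have hfin : ∑ i, ∑ j, c i * c j * K i j
        = r * (-(∑ i, ∑ j, c' i * c' j * Θ i j)) := by
      rw [h1, h2, ← hs]
      ring
    rw [hfin]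
    exact mul_nonneg hr (by linarith)
  -- factor exp(-rΘ_{ij}) = d i * d j * exp (K i j)
  set d : Fin m → ℝ := fun i => Real.exp (-(r * Θ i i0) + r * Θ i0 i0 / 2) with hd
  have hfac : ∀ i j, Real.exp (-(r * Θ i j)) = d i * d j * Real.exp (K i j) := by
    intro i j
    simp only [hd, hK, ← Real.exp_add]
    congr 1
    rw [hsym j i0]
    ring
  intro c
  have h := qf_exp hKpsd (fun i => c i * d i)
  calc (0:ℝ) ≤ ∑ i, ∑ j, (c i * d i) * (c j * d j) * Real.exp (K i j) := h
    _ = ∑ i, ∑ j, c i * c j * Real.exp (-(r * Θ i j)) := by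
        refine Finset.sum_congr rfl fun i _ => Finset.sum_congr rfl fun j _ => ?_
        rw [hfac i j]; ring

/-- Validity condition A1 for the flexible multivariate Matérn
model with a common scale parameter `a`: if `(ν_{ij})` is conditionally negative
definite and `(σ_{ij} Γ(ν_{ij}+3/2)/Γ(ν_{ij}))` is positive semidefinite, then
the matrix of Matérn spectral densities is positive semidefinite at every `λ ≥ 0`. -/
theorem flexible_matern_valid_A1
    (m : ℕ) (hm : 1 ≤ m) (a : ℝ) (ha : 0 < a)
    (ν : Matrix (Fin m) (Fin m) ℝ) (hνsym : ν.IsSymm) (hνpos : ∀ i j, 0 < ν i j)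
    (hνcnd : CondNegDef ν)
    (σ : Matrix (Fin m) (Fin m) ℝ) (hσsym : σ.IsSymm)
    (hσ : (Matrix.of (fun i j =>
      σ i j * Real.Gamma (ν i j + 3/2) / Real.Gamma (ν i j) :
      Matrix (Fin m) (Fin m) ℝ)).PosSemidef) :
    ∀ l : ℝ, 0 ≤ l →
      (Matrix.of (fun i j =>
        σ i j * a ^ (2 * ν i j) * Real.Gamma (ν i j + 3/2) / Real.Gamma (ν i j) *
          (a ^ 2 + l ^ 2) ^ (-(ν i j + 3/2)) :
        Matrix (Fin m) (Fin m) ℝ)).PosSemidef := by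
  intro l hl
  have hνs : ∀ i j, ν i j = ν j i := fun i j => (Matrix.IsSymm.apply hνsym i j).symm
  have hσs : ∀ i j, σ i j = σ j i := fun i j => (Matrix.IsSymm.apply hσsym i j).symm
  have hbase : (0:ℝ) < a ^ 2 + l ^ 2 := by positivity
  set L : ℝ := Real.log (a ^ 2 + l ^ 2) with hL
  set r : ℝ := L - 2 * Real.log a with hrdef
  have hr : 0 ≤ r := by
    have h1 : Real.log (a ^ 2) ≤ Real.log (a ^ 2 + l ^ 2) :=
      Real.log_le_log (by positivity) (by nlinarith)
    have h2 : Real.log (a ^ 2) = 2 * Real.log a := by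
      rw [Real.log_pow]; push_cast; ring
    rw [hrdef, hL]; linarith
  have hentry : ∀ i j,
      σ i j * a ^ (2 * ν i j) * Real.Gamma (ν i j + 3/2) / Real.Gamma (ν i j) *
          (a ^ 2 + l ^ 2) ^ (-(ν i j + 3/2))
      = (σ i j * Real.Gamma (ν i j + 3/2) / Real.Gamma (ν i j)) *
          Real.exp (-(r * ν i j)) * Real.exp (L * -(3/2)) := by
    intro i j
    rw [Real.rpow_def_of_pos ha, Real.rpow_def_of_pos hbase, ← hL]
    have hx : Real.exp (Real.log a * (2 * ν i j)) * Real.exp (L * -(ν i j + 3/2))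
        = Real.exp (-(r * ν i j)) * Real.exp (L * -(3/2)) := by
      rw [← Real.exp_add, ← Real.exp_add]
      congr 1
      rw [hrdef]
      ring
    linear_combination (σ i j * Real.Gamma (ν i j + 3/2) / Real.Gamma (ν i j)) * hx
  have ht : 0 < Real.exp (L * -(3/2)) := Real.exp_pos _
  have hq : QF (fun i j => (σ i j * Real.Gamma (ν i j + 3/2) / Real.Gamma (ν i j)) *
      Real.exp (-(r * ν i j))) := by
    have hE := qf_exp_neg_cnd hm hνs hνcnd hr
    have hprod := qf_mul_posSemidef hE hσ
    intro c
    have h := hprod c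
    calc (0:ℝ) ≤ ∑ i, ∑ j, c i * c j *
          (Real.exp (-(r * ν i j)) * (σ i j * Real.Gamma (ν i j + 3/2) / Real.Gamma (ν i j))) := h
      _ = _ := Finset.sum_congr rfl fun i _ => Finset.sum_congr rfl fun j _ => by ring
  refine qf_posSemidef ?_ ?_
  · intro i j
    simp only [Matrix.of_apply]
    rw [hνs i j, hσs i j]
  · intro c
    have h := hq c
    calc (0:ℝ) ≤ (∑ i, ∑ j, c i * c j *
          ((σ i j * Real.Gamma (ν i j + 3/2) / Real.Gamma (ν i j)) *
            Real.exp (-(r * ν i j)))) * Real.exp (L * -(3/2)) := mul_nonneg h ht.le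
      _ = _ := by
          rw [Finset.sum_mul]
          refine Finset.sum_congr rfl fun i _ => ?_
          rw [Finset.sum_mul]
          refine Finset.sum_congr rfl fun j _ => ?_
          rw [Matrix.of_apply, hentry i j]
          ring
end

section
/- Let m ≥ 1, let ν > 0, let (a_{ij}) be a real symmetric m × m matrix with a_{ij} > 0 for all i, j such that the matrix (a_{ij}²) is conditionally negative definite, and let (σ_{ij}) be a real symmetric m × m matrix such that the matrix with entries σ_{ij} a_{ij}^{2ν} is positive semidefinite. Then for every λ ≥ 0, the m × m matrix with entries σ_{ij} a_{ij}^{2ν} (a_{ij}² + λ²)^{−(ν + 3/2)} is positive semidefinite. -/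
open Matrix Real

open MeasureTheory Set Nat

/-- Quadratic form of a real PSD matrix is nonnegative. -/
lemma quad_nonneg {m : ℕ} {A : Matrix (Fin m) (Fin m) ℝ} (hA : A.PosSemidef)
    (c : Fin m → ℝ) : 0 ≤ ∑ i, ∑ j, c i * c j * A i j := by
  have h := hA.dotProduct_mulVec_nonneg c
  simpa [dotProduct, Matrix.mulVec, Finset.mul_sum, mul_comm, mul_left_comm,
    mul_assoc] using h

lemma psd_of_quad {m : ℕ} {A : Matrix (Fin m) (Fin m) ℝ} (hsym : A.IsSymm)
    (h : ∀ c : Fin m → ℝ, 0 ≤ ∑ i, ∑ j, c i * c j * A i j) : A.PosSemidef := by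
  constructor
  · ext i j
    simpa [Matrix.conjTranspose_apply] using (hsym.apply j i).symm
  · intro c
    have := h c
    simpa [dotProduct, Matrix.mulVec, Finset.mul_sum, mul_comm, mul_left_comm,
      mul_assoc, Finsupp.sum_fintype] using this

/-- Schur product theorem, quadratic-form version. -/
lemma schur_quad {m : ℕ} {A B : Matrix (Fin m) (Fin m) ℝ} (hA : A.PosSemidef)
    (hB : ∀ c : Fin m → ℝ, 0 ≤ ∑ i, ∑ j, c i * c j * B i j) (c : Fin m → ℝ) :
    0 ≤ ∑ i, ∑ j, c i * c j * (A i j * B i j) := by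
  obtain ⟨r, v, hv⟩ := Matrix.posSemidef_iff_eq_sum_vecMulVec.mp hA
  obtain ⟨P, rfl⟩ : ∃ P : Matrix (Fin r) (Fin m) ℝ, A = Pᴴ * P :=
    ⟨Matrix.of fun k i => v k i, by
      ext i j; simp [hv, Matrix.mul_apply, Matrix.sum_apply, vecMulVec_apply, mul_comm]⟩
  have expand : ∀ i j : Fin m, c i * c j * ((Pᴴ * P) i j * B i j)
      = ∑ k, (c i * P k i) * (c j * P k j) * B i j := by
    intro i j
    rw [Matrix.mul_apply, Finset.sum_mul, Finset.mul_sum]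
    refine Finset.sum_congr rfl fun k _ => ?_
    simp [Matrix.conjTranspose_apply]
    ring
  calc (0:ℝ) ≤ ∑ k, ∑ i, ∑ j, (c i * P k i) * (c j * P k j) * B i j := by
        exact Finset.sum_nonneg fun k _ => hB fun i => c i * P k i
    _ = ∑ i, ∑ j, ∑ k, (c i * P k i) * (c j * P k j) * B i j := by
        rw [Finset.sum_comm]
        exact Finset.sum_congr rfl fun i _ => Finset.sum_comm
    _ = ∑ i, ∑ j, c i * c j * ((Pᴴ * P) i j * B i j) := by
        exact Finset.sum_congr rfl fun i _ => Finset.sum_congr rfl fun j _ => (expand i j).symm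

/-- Hadamard powers of a PSD matrix have nonnegative quadratic form. -/
lemma quad_pow {m : ℕ} {B : Matrix (Fin m) (Fin m) ℝ} (hB : B.PosSemidef) (n : ℕ) :
    ∀ c : Fin m → ℝ, 0 ≤ ∑ i, ∑ j, c i * c j * B i j ^ n := by
  induction n with
  | zero =>
      intro c
      have : ∑ i, ∑ j, c i * c j * B i j ^ 0 = (∑ i, c i) * (∑ j, c j) := by
        rw [Finset.sum_mul_sum]
        simp
      rw [this]
      exact mul_self_nonneg _
  | succ n ih =>
      intro c
      have : ∀ i j : Fin m, c i * c j * B i j ^ (n+1) = c i * c j * (B i j * B i j ^ n) := by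
        intro i j; ring
      simp_rw [this]
      exact schur_quad hB ih c

/-- Entrywise exponential of a PSD matrix has nonnegative quadratic form. -/
lemma quad_exp {m : ℕ} {B : Matrix (Fin m) (Fin m) ℝ} (hB : B.PosSemidef) (c : Fin m → ℝ) :
    0 ≤ ∑ i, ∑ j, c i * c j * Real.exp (B i j) := by
  have hsum : ∀ i j : Fin m, Summable (fun n : ℕ => c i * c j * (B i j ^ n / (n ! : ℝ))) :=
    fun i j => (Real.summable_pow_div_factorial (B i j)).mul_left _
  have hrw : ∀ i j : Fin m, c i * c j * Real.exp (B i j)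
      = ∑' n : ℕ, c i * c j * (B i j ^ n / (n ! : ℝ)) := by
    intro i j
    rw [Real.exp_eq_exp_ℝ, NormedSpace.exp_eq_tsum_div, tsum_mul_left]
  calc ∑ i, ∑ j, c i * c j * Real.exp (B i j)
      = ∑ i, ∑ j, ∑' n : ℕ, c i * c j * (B i j ^ n / (n ! : ℝ)) := by
        exact Finset.sum_congr rfl fun i _ => Finset.sum_congr rfl fun j _ => hrw i j
    _ = ∑ i, ∑' n : ℕ, ∑ j, c i * c j * (B i j ^ n / (n ! : ℝ)) :=
        Finset.sum_congr rfl fun i _ => (Summable.tsum_finsetSum fun j _ => hsum i j).symm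
    _ = ∑' n : ℕ, ∑ i, ∑ j, c i * c j * (B i j ^ n / (n ! : ℝ)) :=
        (Summable.tsum_finsetSum fun i (_ : i ∈ Finset.univ) =>
          (hasSum_sum fun j (_ : j ∈ Finset.univ) => (hsum i j).hasSum).summable).symm
    _ ≥ 0 := by
        refine tsum_nonneg fun n => ?_
        have : ∀ i j : Fin m, c i * c j * (B i j ^ n / (n ! : ℝ))
            = c i * c j * B i j ^ n * (1 / (n ! : ℝ)) := by intro i j; ring
        simp_rw [this, ← Finset.sum_mul]
        have h1 : (0:ℝ) ≤ 1 / (n ! : ℝ) := by positivity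
        exact mul_nonneg (quad_pow hB n c) h1

/-- Schoenberg: entrywise exp(-tΘ) of a CND symmetric matrix has nonneg quadratic form. -/
lemma schoenberg_quad {m : ℕ} (hm : 1 ≤ m) {Θ : Matrix (Fin m) (Fin m) ℝ}
    (hsym : Θ.IsSymm) (hcnd : CondNegDef Θ) {t : ℝ} (ht : 0 ≤ t) (c : Fin m → ℝ) :
    0 ≤ ∑ i, ∑ j, c i * c j * Real.exp (-(t * Θ i j)) := by
  set z : Fin m := ⟨0, hm⟩ with hz
  set B : Matrix (Fin m) (Fin m) ℝ :=
    Matrix.of (fun i j => Θ i z + Θ z j - Θ i j - Θ z z) with hBdef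
  have hBsym : B.IsSymm := by
    ext i j
    simp only [hBdef, Matrix.transpose_apply, Matrix.of_apply]
    rw [hsym.apply i j, hsym.apply z j, hsym.apply i z]
    ring
  -- quadratic form of B is nonnegative
  have hBquad : ∀ d : Fin m → ℝ, 0 ≤ ∑ i, ∑ j, d i * d j * B i j := by
    intro d
    set S : ℝ := ∑ i, d i with hS
    set w : Fin m → ℝ := fun i => ∑ j, d j * Θ i j with hw
    set e : Fin m → ℝ := fun i => d i - (if i = z then S else 0) with he
    have hesum : ∑ i, e i = 0 := by
      simp [he, Finset.sum_sub_distrib, Finset.sum_ite_eq', ← hS]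
    have hkey := hcnd e hesum
    have inner_e : ∀ i, ∑ j, e j * Θ i j = w i - S * Θ i z := by
      intro i
      simp only [he, sub_mul, ite_mul, zero_mul, Finset.sum_sub_distrib,
        Finset.sum_ite_eq', Finset.mem_univ, if_true, hw]
    have quad_e : ∑ i, ∑ j, e i * e j * Θ i j
        = (∑ i, d i * w i) - S * (∑ i, d i * Θ i z) - S * w z + S * (S * Θ z z) := by
      have h1 : ∀ i, (∑ j, e i * e j * Θ i j) = e i * (w i - S * Θ i z) := by
        intro i
        rw [← inner_e i, Finset.mul_sum]
        exact Finset.sum_congr rfl fun j _ => by ring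
      have h2 : ∑ i, d i * (S * Θ i z) = S * ∑ i, d i * Θ i z := by
        rw [Finset.mul_sum]
        exact Finset.sum_congr rfl fun i _ => by ring
      calc ∑ i, ∑ j, e i * e j * Θ i j
          = ∑ i, (d i * w i - d i * (S * Θ i z)
              - (if i = z then S * (w i - S * Θ i z) else 0)) :=
            Finset.sum_congr rfl fun i _ => by
              rw [h1 i]; simp only [he]; by_cases hiz : i = z <;> simp [hiz] <;> ring
        _ = (∑ i, d i * w i) - (∑ i, d i * (S * Θ i z)) - S * (w z - S * Θ z z) := by
            rw [Finset.sum_sub_distrib, Finset.sum_sub_distrib,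
              Finset.sum_ite_eq' Finset.univ z (fun i => S * (w i - S * Θ i z))]
            simp only [Finset.mem_univ, if_true]
        _ = (∑ i, d i * w i) - S * (∑ i, d i * Θ i z) - S * w z + S * (S * Θ z z) := by
            rw [h2]; ring
    have inner_B : ∀ i, ∑ j, d j * B i j = S * Θ i z + w z - w i - S * Θ z z := by
      intro i
      calc ∑ j, d j * B i j
          = ∑ j, (d j * Θ i z + d j * Θ z j - d j * Θ i j - d j * Θ z z) :=
            Finset.sum_congr rfl fun j _ => by
              simp only [hBdef, Matrix.of_apply]; ring
        _ = (∑ j, d j * Θ i z) + (∑ j, d j * Θ z j) - (∑ j, d j * Θ i j)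
              - ∑ j, d j * Θ z z := by
            rw [Finset.sum_sub_distrib, Finset.sum_sub_distrib, Finset.sum_add_distrib]
        _ = S * Θ i z + w z - w i - S * Θ z z := by
            rw [← Finset.sum_mul, ← Finset.sum_mul, ← hS]
    have quad_B : ∑ i, ∑ j, d i * d j * B i j
        = S * (∑ i, d i * Θ i z) + S * w z - (∑ i, d i * w i) - S * (S * Θ z z) := by
      calc ∑ i, ∑ j, d i * d j * B i j
          = ∑ i, d i * (S * Θ i z + w z - w i - S * Θ z z) :=
            Finset.sum_congr rfl fun i _ => by
              rw [← inner_B i, Finset.mul_sum]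
              exact Finset.sum_congr rfl fun j _ => by ring
        _ = ∑ i, (S * (d i * Θ i z) + d i * w z - d i * w i - d i * (S * Θ z z)) :=
            Finset.sum_congr rfl fun i _ => by ring
        _ = S * (∑ i, d i * Θ i z) + S * w z - (∑ i, d i * w i) - S * (S * Θ z z) := by
            rw [Finset.sum_sub_distrib, Finset.sum_sub_distrib, Finset.sum_add_distrib,
              ← Finset.mul_sum, ← Finset.sum_mul, ← Finset.sum_mul, ← hS]
            try ring
    linarith
  have hBpsd : B.PosSemidef := psd_of_quad hBsym hBquad
  -- the scaled matrix t • B is also PSD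
  have htBpsd : (Matrix.of fun i j => t * B i j : Matrix (Fin m) (Fin m) ℝ).PosSemidef := by
    refine psd_of_quad ?_ ?_
    · ext i j
      simp only [Matrix.transpose_apply, Matrix.of_apply]
      rw [hBsym.apply i j]
    · intro d
      have : ∑ i, ∑ j, d i * d j * (t * B i j) = t * ∑ i, ∑ j, d i * d j * B i j := by
        rw [Finset.mul_sum]
        refine Finset.sum_congr rfl fun i _ => ?_
        rw [Finset.mul_sum]
        exact Finset.sum_congr rfl fun j _ => by ring
      simp only [Matrix.of_apply]
      rw [this]
      exact mul_nonneg ht (hBquad d)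
  -- factor the exponential
  have factor : ∀ i j, Real.exp (-(t * Θ i j))
      = Real.exp (t * Θ z z) * ((Real.exp (-(t * Θ i z)) * Real.exp (-(t * Θ j z)))
        * Real.exp (t * B i j)) := by
    intro i j
    rw [← Real.exp_add, ← Real.exp_add, ← Real.exp_add]
    congr 1
    have hzj : Θ z j = Θ j z := (hsym.apply z j).symm
    simp only [hBdef, Matrix.of_apply]
    rw [hzj]
    ring
  calc ∑ i, ∑ j, c i * c j * Real.exp (-(t * Θ i j))
      = Real.exp (t * Θ z z) * ∑ i, ∑ j,
          (c i * Real.exp (-(t * Θ i z))) * (c j * Real.exp (-(t * Θ j z)))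
            * Real.exp (t * B i j) := by
        rw [Finset.mul_sum]
        refine Finset.sum_congr rfl fun i _ => ?_
        rw [Finset.mul_sum]
        refine Finset.sum_congr rfl fun j _ => ?_
        rw [factor i j]
        ring
    _ ≥ 0 := by
        refine mul_nonneg (Real.exp_pos _).le ?_
        have := quad_exp htBpsd (fun i => c i * Real.exp (-(t * Θ i z)))
        simpa using this

lemma integrable_aux {s r : ℝ} (hs : 0 < s) (hr : 0 < r) :
    IntegrableOn (fun t : ℝ => t ^ (s - 1) * Real.exp (-(r * t))) (Ioi 0) := by
  have h0 := Real.GammaIntegral_convergent hs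
  have h1 : IntegrableOn (fun t : ℝ => Real.exp (-(r * t)) * (r * t) ^ (s - 1)) (Ioi 0) := by
    have h2 := (integrableOn_Ioi_comp_mul_left_iff
      (fun x : ℝ => Real.exp (-x) * x ^ (s - 1)) 0 hr).mpr
    rw [mul_zero] at h2
    exact h2 h0
  have h3 := h1.const_mul (r ^ (1 - s))
  refine (IntegrableOn.congr_fun h3 ?_ measurableSet_Ioi)
  intro t ht
  rw [mem_Ioi] at ht
  simp only []
  rw [Real.mul_rpow hr.le ht.le]
  rw [show r ^ (1 - s) * (Real.exp (-(r * t)) * (r ^ (s - 1) * t ^ (s - 1)))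
      = (r ^ (1 - s) * r ^ (s - 1)) * (t ^ (s - 1) * Real.exp (-(r * t))) by ring]
  rw [← Real.rpow_add hr]
  norm_num

/-- Validity condition A2(a) for the flexible multivariate Matérn
model with common smoothness `ν`: if `(a_{ij}²)` is conditionally negative
definite and `(σ_{ij} a_{ij}^{2ν})` is positive semidefinite, then the matrix of
Matérn spectral densities is positive semidefinite at every `λ ≥ 0`. -/
theorem flexible_matern_valid_A2a
    (m : ℕ) (hm : 1 ≤ m) (ν : ℝ) (hν : 0 < ν)
    (a : Matrix (Fin m) (Fin m) ℝ) (hasym : a.IsSymm) (hapos : ∀ i j, 0 < a i j)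
    (hacnd : CondNegDef (Matrix.of (fun i j => a i j ^ 2 : Matrix (Fin m) (Fin m) ℝ)))
    (σ : Matrix (Fin m) (Fin m) ℝ) (hσsym : σ.IsSymm)
    (hσ : (Matrix.of (fun i j => σ i j * a i j ^ (2 * ν) :
      Matrix (Fin m) (Fin m) ℝ)).PosSemidef) :
    ∀ l : ℝ, 0 ≤ l →
      (Matrix.of (fun i j =>
        σ i j * a i j ^ (2 * ν) * (a i j ^ 2 + l ^ 2) ^ (-(ν + 3/2)) :
        Matrix (Fin m) (Fin m) ℝ)).PosSemidef := by
  intro l hl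
  set s : ℝ := ν + 3/2 with hsdef
  have hs : 0 < s := by rw [hsdef]; linarith
  have hΓ : 0 < Real.Gamma s := Real.Gamma_pos_of_pos hs
  set Θ : Matrix (Fin m) (Fin m) ℝ := Matrix.of (fun i j => a i j ^ 2) with hΘdef
  have hΘsym : Θ.IsSymm := by
    ext i j
    simp only [hΘdef, Matrix.transpose_apply, Matrix.of_apply]
    rw [hasym.apply i j]
  have hr : ∀ i j, 0 < a i j ^ 2 + l ^ 2 := by
    intro i j
    have h := hapos i j
    positivity
  refine psd_of_quad ?_ ?_
  · ext i j
    simp only [Matrix.transpose_apply, Matrix.of_apply]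
    rw [hσsym.apply i j, hasym.apply i j]
  · intro c
    have key : ∀ i j, ((a i j ^ 2 + l ^ 2 : ℝ)) ^ (-s)
        = (1 / Real.Gamma s) * ∫ t in Ioi (0:ℝ),
            t ^ (s - 1) * Real.exp (-((a i j ^ 2 + l ^ 2) * t)) := by
      intro i j
      rw [Real.integral_rpow_mul_exp_neg_mul_Ioi hs (hr i j)]
      rw [one_div (a i j ^ 2 + l ^ 2), Real.inv_rpow (hr i j).le,
        ← Real.rpow_neg (hr i j).le]
      rw [mul_comm ((a i j ^ 2 + l ^ 2) ^ (-s)) (Real.Gamma s), one_div, inv_mul_cancel_left₀ hΓ.ne']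
    have hint : ∀ i j : Fin m, IntegrableOn
        (fun t : ℝ => c i * c j * (σ i j * a i j ^ (2 * ν))
          * (t ^ (s - 1) * Real.exp (-((a i j ^ 2 + l ^ 2) * t)))) (Ioi 0) :=
      fun i j => (integrable_aux hs (hr i j)).const_mul _
    calc ∑ i, ∑ j, c i * c j *
          Matrix.of (fun i j => σ i j * a i j ^ (2 * ν) * (a i j ^ 2 + l ^ 2) ^ (-s)) i j
        = ∑ i, ∑ j, (1 / Real.Gamma s) * ∫ t in Ioi (0:ℝ),
            c i * c j * (σ i j * a i j ^ (2 * ν))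
              * (t ^ (s - 1) * Real.exp (-((a i j ^ 2 + l ^ 2) * t))) := by
          refine Finset.sum_congr rfl fun i _ => Finset.sum_congr rfl fun j _ => ?_
          rw [Matrix.of_apply, key i j,
            show c i * c j * (σ i j * a i j ^ (2 * ν) * ((1 / Real.Gamma s) *
              ∫ t in Ioi (0:ℝ), t ^ (s - 1) * Real.exp (-((a i j ^ 2 + l ^ 2) * t))))
            = (1 / Real.Gamma s) * ((c i * c j * (σ i j * a i j ^ (2 * ν))) *
              ∫ t in Ioi (0:ℝ), t ^ (s - 1) * Real.exp (-((a i j ^ 2 + l ^ 2) * t))) by ring,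
            ← MeasureTheory.integral_const_mul]
      _ = (1 / Real.Gamma s) * ∑ i, ∑ j, ∫ t in Ioi (0:ℝ),
            c i * c j * (σ i j * a i j ^ (2 * ν))
              * (t ^ (s - 1) * Real.exp (-((a i j ^ 2 + l ^ 2) * t))) := by
          rw [Finset.mul_sum]
          exact Finset.sum_congr rfl fun i _ => (Finset.mul_sum _ _ _).symm
      _ = (1 / Real.Gamma s) * ∫ t in Ioi (0:ℝ), ∑ i, ∑ j,
            c i * c j * (σ i j * a i j ^ (2 * ν))
              * (t ^ (s - 1) * Real.exp (-((a i j ^ 2 + l ^ 2) * t))) := by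
          congr 1
          calc ∑ i, ∑ j, ∫ t in Ioi (0:ℝ), c i * c j * (σ i j * a i j ^ (2 * ν))
                * (t ^ (s - 1) * Real.exp (-((a i j ^ 2 + l ^ 2) * t)))
              = ∑ i, ∫ t in Ioi (0:ℝ), ∑ j, c i * c j * (σ i j * a i j ^ (2 * ν))
                * (t ^ (s - 1) * Real.exp (-((a i j ^ 2 + l ^ 2) * t))) :=
                Finset.sum_congr rfl fun i _ =>
                  (MeasureTheory.integral_finset_sum Finset.univ fun j _ => hint i j).symm
            _ = ∫ t in Ioi (0:ℝ), ∑ i, ∑ j, c i * c j * (σ i j * a i j ^ (2 * ν))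
                * (t ^ (s - 1) * Real.exp (-((a i j ^ 2 + l ^ 2) * t))) :=
                (MeasureTheory.integral_finset_sum Finset.univ fun i _ =>
                  MeasureTheory.integrable_finset_sum Finset.univ fun j _ => hint i j).symm
      _ ≥ 0 := by
          refine mul_nonneg (by positivity) ?_
          refine MeasureTheory.setIntegral_nonneg measurableSet_Ioi fun t ht => ?_
          rw [mem_Ioi] at ht
          have hterm : ∀ i j : Fin m, c i * c j * (σ i j * a i j ^ (2 * ν))
              * (t ^ (s - 1) * Real.exp (-((a i j ^ 2 + l ^ 2) * t)))
              = (t ^ (s - 1) * Real.exp (-(l ^ 2 * t))) *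
                (c i * c j * ((σ i j * a i j ^ (2 * ν)) * Real.exp (-(t * Θ i j)))) := by
            intro i j
            rw [show -((a i j ^ 2 + l ^ 2) * t) = -(l ^ 2 * t) + -(t * Θ i j) by
              simp only [hΘdef, Matrix.of_apply]; ring, Real.exp_add]
            ring
          simp_rw [hterm, ← Finset.mul_sum]
          refine mul_nonneg ?_ ?_
          · have := Real.rpow_nonneg ht.le (s - 1)
            positivity
          · exact schur_quad hσ
              (fun d => schoenberg_quad hm hΘsym hacnd ht.le d) c
end

section
/- Let m ≥ 1, let ν > 0, let (a_{ij}) be a real symmetric m × m matrix with a_{ij} > 0 for all i, j such that the matrix (a_{ij}^{−2}) is conditionally negative definite, and let (σ_{ij}) be a real symmetric m × m matrix such that the matrix with entries σ_{ij} a_{ij}^{−3} is positive semidefinite. Then for every λ ≥ 0, the m × m matrix with entries σ_{ij} a_{ij}^{2ν} (a_{ij}² + λ²)^{−(ν + 3/2)} is positive semidefinite. -/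
open Matrix Real MeasureTheory Set

namespace FlexMaternAux

variable {m : ℕ}

/-- Quadratic form of a matrix. -/
def Q (B : Matrix (Fin m) (Fin m) ℝ) (c : Fin m → ℝ) : ℝ :=
  ∑ i, ∑ j, c i * c j * B i j

lemma dot_eq_Q (B : Matrix (Fin m) (Fin m) ℝ) (x : Fin m → ℝ) :
    dotProduct x (B *ᵥ x) = Q B x := by
  simp only [dotProduct, Matrix.mulVec, Q, Finset.mul_sum]
  exact Finset.sum_congr rfl fun i _ => Finset.sum_congr rfl fun j _ => by
    ring

lemma posSemidef_of_Q (B : Matrix (Fin m) (Fin m) ℝ)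
    (hsym : ∀ i j, B i j = B j i) (h : ∀ c, 0 ≤ Q B c) : B.PosSemidef := by
  refine posSemidef_iff_dotProduct_mulVec.mpr ⟨?_, fun x => ?_⟩
  · ext i j
    simp only [Matrix.conjTranspose_apply, star_trivial]
    exact hsym j i
  · simpa [star_trivial, dot_eq_Q] using h x

lemma Q_of_posSemidef {B : Matrix (Fin m) (Fin m) ℝ} (h : B.PosSemidef) (c : Fin m → ℝ) :
    0 ≤ Q B c := by
  have := h.dotProduct_mulVec_nonneg c
  simpa [star_trivial, dot_eq_Q] using this

open scoped MatrixOrder in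
/-- Schur product theorem, quadratic form version. -/
lemma schurQ {A : Matrix (Fin m) (Fin m) ℝ} (hA : A.PosSemidef)
    (B : Matrix (Fin m) (Fin m) ℝ) (hB : ∀ c, 0 ≤ Q B c) (c : Fin m → ℝ) :
    0 ≤ Q (Matrix.of fun i j => A i j * B i j) c := by
  obtain ⟨U, rfl⟩ : ∃ U : Matrix (Fin m) (Fin m) ℝ, A = Uᴴ * U := by
    obtain ⟨U, rfl⟩ := CStarAlgebra.nonneg_iff_eq_star_mul_self.mp hA.nonneg
    exact ⟨U, rfl⟩
  have hent : ∀ i j, (Uᴴ * U) i j = ∑ k, U k i * U k j := by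
    intro i j
    simp [Matrix.mul_apply, Matrix.conjTranspose_apply]
  have key : Q (Matrix.of fun i j => (Uᴴ * U) i j * B i j) c
      = ∑ k, Q B (fun i => c i * U k i) := by
    calc Q (Matrix.of fun i j => (Uᴴ * U) i j * B i j) c
        = ∑ i, ∑ j, ∑ k, (c i * U k i) * ((c j * U k j) * B i j) := by
          refine Finset.sum_congr rfl fun i _ => Finset.sum_congr rfl fun j _ => ?_
          simp only [Q, Matrix.of_apply, hent, Finset.sum_mul, Finset.mul_sum]
          exact Finset.sum_congr rfl fun k _ => by ring
      _ = ∑ k, ∑ i, ∑ j, (c i * U k i) * ((c j * U k j) * B i j) := by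
          rw [show (∑ i, ∑ j, ∑ k, (c i * U k i) * ((c j * U k j) * B i j))
              = ∑ i, ∑ k, ∑ j, (c i * U k i) * ((c j * U k j) * B i j) from
            Finset.sum_congr rfl fun i _ => Finset.sum_comm]
          exact Finset.sum_comm
      _ = ∑ k, Q B (fun i => c i * U k i) := by
          refine Finset.sum_congr rfl fun k _ => ?_
          simp only [Q]
          exact Finset.sum_congr rfl fun i _ => Finset.sum_congr rfl fun j _ => by ring
  rw [key]
  exact Finset.sum_nonneg fun k _ => hB _

/-- Hadamard powers of a "PSD quadratic form" matrix keep the form nonneg. -/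
lemma powQ {N : Matrix (Fin m) (Fin m) ℝ} (hsym : ∀ i j, N i j = N j i)
    (hN : ∀ c, 0 ≤ Q N c) : ∀ n : ℕ, ∀ c, 0 ≤ Q (Matrix.of fun i j => N i j ^ n) c := by
  intro n
  induction n with
  | zero =>
      intro c
      have : Q (Matrix.of fun i j => N i j ^ 0) c = (∑ i, c i) ^ 2 := by
        simp only [Q, Matrix.of_apply, pow_zero, mul_one, sq, Finset.sum_mul]
        exact Finset.sum_congr rfl fun i _ => by rw [Finset.mul_sum]
      rw [this]; positivity
  | succ n ih =>
      intro c
      have hApsd : (Matrix.of fun i j => N i j ^ n : Matrix (Fin m) (Fin m) ℝ).PosSemidef :=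
        posSemidef_of_Q _ (fun i j => by simp [hsym i j]) ih
      have := schurQ hApsd N hN c
      have heq : Q (Matrix.of fun i j => N i j ^ (n + 1)) c
          = Q (Matrix.of fun i j => (Matrix.of fun i j => N i j ^ n) i j * N i j) c := by
        simp only [Q, Matrix.of_apply, pow_succ]
      rw [heq]
      exact this

/-- Entrywise exponential of a "PSD quadratic form" matrix. -/
lemma expQ {N : Matrix (Fin m) (Fin m) ℝ} (hsym : ∀ i j, N i j = N j i)
    (hN : ∀ c, 0 ≤ Q N c) {t : ℝ} (ht : 0 ≤ t) (c : Fin m → ℝ) :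
    0 ≤ Q (Matrix.of fun i j => Real.exp (t * N i j)) c := by
  have hexp : ∀ x : ℝ, Real.exp x = ∑' n : ℕ, x ^ n / (n.factorial : ℝ) := by
    intro x
    rw [Real.exp_eq_exp_ℝ, NormedSpace.exp_eq_tsum_div]
  have hsumm : ∀ (r : ℝ) (x : ℝ), Summable (fun n : ℕ => r * (x ^ n / (n.factorial : ℝ))) :=
    fun r x => (Real.summable_pow_div_factorial x).mul_left r
  have key : Q (Matrix.of fun i j => Real.exp (t * N i j)) c
      = ∑' n : ℕ, ∑ i, ∑ j, c i * c j * ((t * N i j) ^ n / (n.factorial : ℝ)) := by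
    have h1 : Q (Matrix.of fun i j => Real.exp (t * N i j)) c
        = ∑ i, ∑ j, ∑' n : ℕ, c i * c j * ((t * N i j) ^ n / (n.factorial : ℝ)) := by
      refine Finset.sum_congr rfl fun i _ => Finset.sum_congr rfl fun j _ => ?_
      rw [Matrix.of_apply, hexp, ← tsum_mul_left]
    rw [h1]
    have h2 : ∀ i : Fin m, (∑ j, ∑' n : ℕ, c i * c j * ((t * N i j) ^ n / (n.factorial : ℝ)))
        = ∑' n : ℕ, ∑ j, c i * c j * ((t * N i j) ^ n / (n.factorial : ℝ)) :=
      fun i => (Summable.tsum_finsetSum fun j _ => hsumm _ _).symm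
    rw [Finset.sum_congr rfl fun i _ => h2 i]
    exact (Summable.tsum_finsetSum fun i _ => summable_sum fun j _ => hsumm _ _).symm
  rw [key]
  refine tsum_nonneg fun n => ?_
  have hterm : (∑ i, ∑ j, c i * c j * ((t * N i j) ^ n / (n.factorial : ℝ)))
      = (t ^ n / (n.factorial : ℝ)) * Q (Matrix.of fun i j => N i j ^ n) c := by
    simp only [Q, Matrix.of_apply, Finset.mul_sum]
    refine Finset.sum_congr rfl fun i _ => Finset.sum_congr rfl fun j _ => ?_
    rw [mul_pow]
    ring
  rw [hterm]
  have h1 : (0:ℝ) ≤ t ^ n / (n.factorial : ℝ) := by positivity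
  exact mul_nonneg h1 (powQ hsym hN n c)

/-- Schoenberg: if `θ` is conditionally negative definite (quadratic-form sense)
and symmetric, then the entrywise `exp (-(u * θ i j))` has nonneg quadratic form. -/
lemma schoenbergQ (hm : 1 ≤ m) {θ : Matrix (Fin m) (Fin m) ℝ}
    (hsym : ∀ i j, θ i j = θ j i)
    (hcnd : ∀ c : Fin m → ℝ, (∑ i, c i) = 0 → (∑ i, ∑ j, c i * c j * θ i j) ≤ 0)
    {u : ℝ} (hu : 0 ≤ u) (c : Fin m → ℝ) :
    0 ≤ Q (Matrix.of fun i j => Real.exp (-(u * θ i j))) c := by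
  have hmpos : 0 < m := hm
  set z : Fin m := ⟨0, hmpos⟩ with hz
  set N : Matrix (Fin m) (Fin m) ℝ :=
    Matrix.of (fun i j => θ i z + θ z j - θ i j - θ z z) with hNdef
  have hNapp : ∀ i j, N i j = θ i z + θ z j - θ i j - θ z z := fun i j => rfl
  have hNsym : ∀ i j, N i j = N j i := by
    intro i j
    rw [hNapp, hNapp, hsym i j, hsym z j, hsym z i]
    ring
  have hNQ : ∀ d : Fin m → ℝ, 0 ≤ Q N d := by
    intro d
    set s : ℝ := ∑ i, d i with hsdef
    set e : Fin m → ℝ := fun i => d i - (if i = z then s else 0) with hedef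
    have he : (∑ i, e i) = 0 := by
      simp only [hedef, Finset.sum_sub_distrib, Finset.sum_ite_eq', Finset.mem_univ,
        if_true, ← hsdef, sub_self]
    have hq := hcnd e he
    -- expand the quadratic form in e
    have hT2 : ∀ i : Fin m, (∑ j, d i * (if j = z then s else 0) * θ i j)
        = d i * s * θ i z := by
      intro i
      rw [Finset.sum_eq_single z]
      · simp
      · intro b _ hb; simp [hb]
      · intro h; exact absurd (Finset.mem_univ z) h
    have hT3 : ∀ i : Fin m, (∑ j, (if i = z then s else 0) * d j * θ i j)
        = (if i = z then ∑ j, s * d j * θ z j else 0) := by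
      intro i
      by_cases hi : i = z
      · subst hi; simp
      · simp [hi]
    have hT4 : ∀ i : Fin m, (∑ j, (if i = z then s else 0) * (if j = z then s else 0) * θ i j)
        = (if i = z then s * s * θ z z else 0) := by
      intro i
      by_cases hi : i = z
      · subst hi
        rw [Finset.sum_eq_single z]
        · simp
        · intro b _ hb; simp [hb]
        · intro h; exact absurd (Finset.mem_univ z) h
      · simp [hi]
    have hexpand : (∑ i, ∑ j, e i * e j * θ i j)
        = (∑ i, ∑ j, d i * d j * θ i j) - (∑ i, d i * s * θ i z)
          - (∑ j, s * d j * θ z j) + s * s * θ z z := by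
      have hleaf : ∀ i j, e i * e j * θ i j
          = d i * d j * θ i j - d i * (if j = z then s else 0) * θ i j
            - (if i = z then s else 0) * d j * θ i j
            + (if i = z then s else 0) * (if j = z then s else 0) * θ i j := by
        intro i j; simp only [hedef]; ring
      calc (∑ i, ∑ j, e i * e j * θ i j)
          = ∑ i, ((∑ j, d i * d j * θ i j) - (∑ j, d i * (if j = z then s else 0) * θ i j)
              - (∑ j, (if i = z then s else 0) * d j * θ i j)
              + (∑ j, (if i = z then s else 0) * (if j = z then s else 0) * θ i j)) := by
            refine Finset.sum_congr rfl fun i _ => ?_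
            rw [← Finset.sum_sub_distrib, ← Finset.sum_sub_distrib, ← Finset.sum_add_distrib]
            exact Finset.sum_congr rfl fun j _ => hleaf i j
        _ = (∑ i, ∑ j, d i * d j * θ i j) - (∑ i, d i * s * θ i z)
            - (∑ j, s * d j * θ z j) + s * s * θ z z := by
            rw [Finset.sum_add_distrib, Finset.sum_sub_distrib, Finset.sum_sub_distrib]
            congr 1
            · congr 1
              · congr 1
                exact Finset.sum_congr rfl fun i _ => hT2 i
              · rw [Finset.sum_congr rfl fun i _ => hT3 i]
                rw [Finset.sum_eq_single z]
                · simp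
                · intro b _ hb; simp [hb]
                · intro h; exact absurd (Finset.mem_univ z) h
            · rw [Finset.sum_congr rfl fun i _ => hT4 i]
              rw [Finset.sum_eq_single z]
              · simp
              · intro b _ hb; simp [hb]
              · intro h; exact absurd (Finset.mem_univ z) h
    have hQN : Q N d = (∑ i, d i * s * θ i z) + (∑ j, s * d j * θ z j)
        - (∑ i, ∑ j, d i * d j * θ i j) - s * s * θ z z := by
      have hA1 : (∑ i, ∑ j, d i * d j * θ i z) = (∑ i, d i * s * θ i z) := by
        refine Finset.sum_congr rfl fun i _ => ?_
        rw [show (∑ j, d i * d j * θ i z) = ∑ j, (d i * θ i z) * d j from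
          Finset.sum_congr rfl fun j _ => by ring, ← Finset.mul_sum, ← hsdef]
        ring
      have hA2 : (∑ i, ∑ j, d i * d j * θ z j) = (∑ j, s * d j * θ z j) := by
        rw [Finset.sum_comm]
        refine Finset.sum_congr rfl fun j _ => ?_
        rw [show (∑ i, d i * d j * θ z j) = ∑ i, (d j * θ z j) * d i from
          Finset.sum_congr rfl fun i _ => by ring, ← Finset.mul_sum, ← hsdef]
        ring
      have hA3 : (∑ i, ∑ j, d i * d j * θ z z) = s * s * θ z z := by
        rw [show (∑ i, ∑ j, d i * d j * θ z z) = ∑ i, (d i * θ z z) * ∑ j, d j from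
          Finset.sum_congr rfl fun i _ => by
            rw [Finset.mul_sum]; exact Finset.sum_congr rfl fun j _ => by ring,
          ← hsdef]
        rw [show (∑ i, d i * θ z z * s) = (∑ i, d i) * θ z z * s from by
          rw [Finset.sum_mul, Finset.sum_mul], ← hsdef]
        ring
      calc Q N d = ∑ i, ∑ j, (d i * d j * θ i z + d i * d j * θ z j
            - d i * d j * θ i j - d i * d j * θ z z) := by
            refine Finset.sum_congr rfl fun i _ => Finset.sum_congr rfl fun j _ => ?_
            rw [hNapp]; ring
        _ = (∑ i, ∑ j, d i * d j * θ i z) + (∑ i, ∑ j, d i * d j * θ z j)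
            - (∑ i, ∑ j, d i * d j * θ i j) - (∑ i, ∑ j, d i * d j * θ z z) := by
            simp only [← Finset.sum_add_distrib, ← Finset.sum_sub_distrib]
        _ = (∑ i, d i * s * θ i z) + (∑ j, s * d j * θ z j)
            - (∑ i, ∑ j, d i * d j * θ i j) - s * s * θ z z := by
            rw [hA1, hA2, hA3]
    linarith [hq, hexpand, hQN]
  -- now factor the exponential
  set d : Fin m → ℝ := fun i => c i * Real.exp (-(u * θ i z)) with hddef
  have hfac : ∀ i j, c i * c j * Real.exp (-(u * θ i j))
      = Real.exp (u * θ z z) * (d i * d j * Real.exp (u * N i j)) := by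
    intro i j
    simp only [hddef]
    rw [show Real.exp (u * θ z z) * (c i * Real.exp (-(u * θ i z)) *
        (c j * Real.exp (-(u * θ j z))) * Real.exp (u * N i j))
      = (c i * c j) * (Real.exp (u * θ z z) * Real.exp (-(u * θ i z)) *
        Real.exp (-(u * θ j z)) * Real.exp (u * N i j)) from by ring]
    rw [← Real.exp_add, ← Real.exp_add, ← Real.exp_add, hNapp]
    rw [hsym z j]
    ring_nf
  have hQd := expQ hNsym hNQ hu d
  have : Q (Matrix.of fun i j => Real.exp (-(u * θ i j))) c
      = Real.exp (u * θ z z) * Q (Matrix.of fun i j => Real.exp (u * N i j)) d := by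
    simp only [Q, Matrix.of_apply, Finset.mul_sum]
    exact Finset.sum_congr rfl fun i _ => Finset.sum_congr rfl fun j _ => hfac i j
  rw [this]
  exact mul_nonneg (Real.exp_nonneg _) hQd


end FlexMaternAux

open FlexMaternAux

/-- Validity condition A2(b) for the flexible multivariate Matérn
model with common smoothness `ν`: if `(a_{ij}^{−2})` is conditionally negative
definite and `(σ_{ij} a_{ij}^{−3})` is positive semidefinite, then the matrix of
Matérn spectral densities is positive semidefinite at every `λ ≥ 0`. -/
theorem flexible_matern_valid_A2b
    (m : ℕ) (hm : 1 ≤ m) (ν : ℝ) (hν : 0 < ν)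
    (a : Matrix (Fin m) (Fin m) ℝ) (hasym : a.IsSymm) (hapos : ∀ i j, 0 < a i j)
    (hacnd : CondNegDef (Matrix.of (fun i j => a i j ^ (-2 : ℝ) :
      Matrix (Fin m) (Fin m) ℝ)))
    (σ : Matrix (Fin m) (Fin m) ℝ) (hσsym : σ.IsSymm)
    (hσ : (Matrix.of (fun i j => σ i j * a i j ^ (-3 : ℝ) :
      Matrix (Fin m) (Fin m) ℝ)).PosSemidef) :
    ∀ l : ℝ, 0 ≤ l →
      (Matrix.of (fun i j =>
        σ i j * a i j ^ (2 * ν) * (a i j ^ 2 + l ^ 2) ^ (-(ν + 3/2)) :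
        Matrix (Fin m) (Fin m) ℝ)).PosSemidef := by
  intro l hl
  have hsν : (0:ℝ) < ν + 3/2 := by linarith
  have hΓpos : 0 < Real.Gamma (ν + 3/2) := Real.Gamma_pos_of_pos hsν
  -- pointwise entry identity
  have key : ∀ p : ℝ, 0 < p →
      p ^ (-3 : ℝ) * (1 + l ^ 2 * p ^ (-2 : ℝ)) ^ (-(ν + 3/2))
        = p ^ (2 * ν) * (p ^ 2 + l ^ 2) ^ (-(ν + 3/2)) := by
    intro p hp
    have hq : (0:ℝ) < p ^ 2 + l ^ 2 := by positivity
    have hp2 : p ^ (-2 : ℝ) = (p ^ 2)⁻¹ := by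
      rw [show (-2 : ℝ) = -((2:ℕ):ℝ) by norm_num, Real.rpow_neg hp.le, Real.rpow_natCast]
    have h1 : (1 + l ^ 2 * p ^ (-2 : ℝ)) = (p ^ 2 + l ^ 2) * p ^ (-2 : ℝ) := by
      rw [hp2]
      have hpne : (p : ℝ) ^ 2 ≠ 0 := by positivity
      field_simp
    rw [h1, Real.mul_rpow hq.le (Real.rpow_nonneg hp.le _), ← Real.rpow_mul hp.le]
    rw [show ((-2 : ℝ) * -(ν + 3/2)) = 2 * ν + 3 by ring]
    rw [show p ^ (-3 : ℝ) * ((p ^ 2 + l ^ 2) ^ (-(ν + 3/2)) * p ^ (2 * ν + 3))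
        = (p ^ (-3 : ℝ) * p ^ (2 * ν + 3)) * (p ^ 2 + l ^ 2) ^ (-(ν + 3/2)) from by ring]
    rw [← Real.rpow_add hp, show ((-3 : ℝ) + (2 * ν + 3)) = 2 * ν by ring]
  -- the "B" matrix
  set B : Matrix (Fin m) (Fin m) ℝ :=
    Matrix.of (fun i j => (1 + l ^ 2 * a i j ^ (-2 : ℝ)) ^ (-(ν + 3/2))) with hBdef
  have hrpos : ∀ i j, (0:ℝ) < 1 + l ^ 2 * a i j ^ (-2 : ℝ) := by
    intro i j
    have h1 : (0:ℝ) < a i j ^ (-2 : ℝ) := Real.rpow_pos_of_pos (hapos i j) _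
    nlinarith [sq_nonneg l]
  have hint : ∀ i j, IntegrableOn
      (fun t : ℝ => t ^ (ν + 3/2 - 1) * Real.exp (-((1 + l ^ 2 * a i j ^ (-2 : ℝ)) * t)))
      (Ioi 0) volume := by
    intro i j
    have := integrableOn_rpow_mul_exp_neg_mul_rpow (s := ν + 3/2 - 1) (p := 1)
      (b := 1 + l ^ 2 * a i j ^ (-2 : ℝ)) (by linarith) one_pos (hrpos i j)
    refine this.congr_fun (fun x hx => ?_) measurableSet_Ioi
    simp only [Real.rpow_one, neg_mul]
  have hBval : ∀ i j, B i j * Real.Gamma (ν + 3/2)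
      = ∫ t in Ioi 0, t ^ (ν + 3/2 - 1) *
          Real.exp (-((1 + l ^ 2 * a i j ^ (-2 : ℝ)) * t)) := by
    intro i j
    rw [Real.integral_rpow_mul_exp_neg_mul_Ioi hsν (hrpos i j)]
    congr 1
    simp only [hBdef, Matrix.of_apply, one_div,
      Real.inv_rpow (hrpos i j).le, ← Real.rpow_neg (hrpos i j).le]
  -- quadratic form of B is nonneg
  have hBQ : ∀ c, 0 ≤ Q B c := by
    intro c
    have hcnd' : ∀ c : Fin m → ℝ, (∑ i, c i) = 0 →
        (∑ i, ∑ j, c i * c j * (Matrix.of (fun i j => a i j ^ (-2 : ℝ) :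
          Matrix (Fin m) (Fin m) ℝ)) i j) ≤ 0 := hacnd
    have hθsym : ∀ i j, (Matrix.of (fun i j => a i j ^ (-2 : ℝ) :
        Matrix (Fin m) (Fin m) ℝ)) i j = (Matrix.of (fun i j => a i j ^ (-2 : ℝ) :
        Matrix (Fin m) (Fin m) ℝ)) j i := by
      intro i j
      simp only [Matrix.of_apply]
      rw [hasym.apply i j]
    have hmain : Q B c * Real.Gamma (ν + 3/2)
        = ∫ t in Ioi 0, ∑ i, ∑ j, c i * c j *
            (t ^ (ν + 3/2 - 1) * Real.exp (-((1 + l ^ 2 * a i j ^ (-2 : ℝ)) * t))) := by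
      rw [MeasureTheory.integral_finset_sum _ (fun i _ =>
        integrable_finset_sum _ (fun j _ => ((hint i j).const_mul (c i * c j))))]
      rw [Finset.sum_congr rfl fun i _ => MeasureTheory.integral_finset_sum _
        (fun j _ => ((hint i j).const_mul (c i * c j)))]
      simp only [Q, Finset.sum_mul]
      refine Finset.sum_congr rfl fun i _ => Finset.sum_congr rfl fun j _ => ?_
      rw [MeasureTheory.integral_const_mul, ← hBval i j]
      ring
    have hI : 0 ≤ ∫ t in Ioi 0, ∑ i, ∑ j, c i * c j *
        (t ^ (ν + 3/2 - 1) * Real.exp (-((1 + l ^ 2 * a i j ^ (-2 : ℝ)) * t))) := by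
      refine MeasureTheory.setIntegral_nonneg measurableSet_Ioi fun t ht => ?_
      have hu : (0:ℝ) ≤ t * l ^ 2 := mul_nonneg (le_of_lt ht) (sq_nonneg l)
      have hsch := schoenbergQ hm hθsym hcnd' hu c
      have hfact : (∑ i, ∑ j, c i * c j *
          (t ^ (ν + 3/2 - 1) * Real.exp (-((1 + l ^ 2 * a i j ^ (-2 : ℝ)) * t))))
          = (t ^ (ν + 3/2 - 1) * Real.exp (-t)) *
            Q (Matrix.of fun i j => Real.exp (-((t * l ^ 2) *
              (Matrix.of (fun i j => a i j ^ (-2 : ℝ) :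
                Matrix (Fin m) (Fin m) ℝ)) i j))) c := by
        simp only [Q, Matrix.of_apply, Finset.mul_sum]
        refine Finset.sum_congr rfl fun i _ => Finset.sum_congr rfl fun j _ => ?_
        have hexp : Real.exp (-((1 + l ^ 2 * a i j ^ (-2 : ℝ)) * t))
            = Real.exp (-t) * Real.exp (-((t * l ^ 2) * a i j ^ (-2 : ℝ))) := by
          rw [← Real.exp_add]
          congr 1
          ring
        rw [hexp]
        ring
      rw [hfact]
      have h1 : (0:ℝ) ≤ t ^ (ν + 3/2 - 1) * Real.exp (-t) :=
        mul_nonneg (Real.rpow_nonneg (le_of_lt ht) _) (Real.exp_nonneg _)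
      exact mul_nonneg h1 hsch
    nlinarith [hmain, hI, hΓpos]
  -- assemble
  refine posSemidef_of_Q _ ?_ ?_
  · intro i j
    simp only [Matrix.of_apply]
    rw [hσsym.apply i j, hasym.apply i j]
  · intro c
    have hc : Q (Matrix.of (fun i j =>
        σ i j * a i j ^ (2 * ν) * (a i j ^ 2 + l ^ 2) ^ (-(ν + 3/2)) :
        Matrix (Fin m) (Fin m) ℝ)) c
        = Q (Matrix.of fun i j => (Matrix.of (fun i j => σ i j * a i j ^ (-3 : ℝ) :
            Matrix (Fin m) (Fin m) ℝ)) i j * B i j) c := by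
      simp only [Q, Matrix.of_apply, hBdef]
      refine Finset.sum_congr rfl fun i _ => Finset.sum_congr rfl fun j _ => ?_
      rw [show σ i j * a i j ^ (-3 : ℝ) * (1 + l ^ 2 * a i j ^ (-2 : ℝ)) ^ (-(ν + 3/2))
          = σ i j * (a i j ^ (-3 : ℝ) * (1 + l ^ 2 * a i j ^ (-2 : ℝ)) ^ (-(ν + 3/2)))
          from by ring, key (a i j) (hapos i j)]
      ring
    rw [hc]
    exact schurQ hσ B hBQ c
end

section
/- Let m ≥ 1, let ν_1,…,ν_m > 0 and a_1,…,a_m > 0, and set ν_{ij} = (ν_i + ν_j)/2 and a_{ij} = ((a_i² + a_j²)/2)^{1/2}. Let (σ_{ij}) be a real symmetric m × m matrix such that the matrix with entries σ_{ij} a_{ij}^{2ν_{ij}} / Γ(ν_{ij}) is positive semidefinite. Then for every λ ≥ 0, the m × m matrix with entries σ_{ij} a_{ij}^{2ν_{ij}} Γ(ν_{ij} + 3/2)/Γ(ν_{ij}) · (a_{ij}² + λ²)^{−(ν_{ij} + 3/2)} is positive semidefinite. -/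
open Matrix Real MeasureTheory Set

/-- Schur product theorem (real case): the entrywise product of two positive
semidefinite real matrices is positive semidefinite. -/
lemma schur_product_psd {m : ℕ} {A B : Matrix (Fin m) (Fin m) ℝ}
    (hA : A.PosSemidef) (hB : B.PosSemidef) :
    (Matrix.of fun i j => A i j * B i j).PosSemidef := by
  obtain ⟨C, hC⟩ : ∃ C : Matrix (Fin m) (Fin m) ℝ, B = star C * C := by
    open scoped MatrixOrder in exact CStarAlgebra.nonneg_iff_eq_star_mul_self.mp hB.nonneg
  have hBij : ∀ i j, B i j = ∑ k, C k i * C k j := by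
    intro i j
    rw [hC]
    simp [Matrix.mul_apply, Matrix.conjTranspose_apply]
  rw [Matrix.posSemidef_iff_dotProduct_mulVec]
  constructor
  · ext i j
    simp only [Matrix.conjTranspose_apply, Matrix.of_apply, star_trivial]
    have h1 : A j i = A i j := by
      have := congrFun (congrFun hA.1 i) j
      simpa using this
    have h2 : B j i = B i j := by
      have := congrFun (congrFun hB.1 i) j
      simpa using this
    rw [h1, h2]
  · rw [Matrix.posSemidef_iff_dotProduct_mulVec] at hA
    intro x
    have key : star x ⬝ᵥ ((Matrix.of fun i j => A i j * B i j) *ᵥ x)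
        = ∑ k, star (fun i => x i * C k i) ⬝ᵥ (A *ᵥ fun i => x i * C k i) := by
      simp only [star_trivial, dotProduct, mulVec, Matrix.of_apply]
      calc ∑ i, x i * ∑ j, (A i j * B i j) * x j
          = ∑ i, ∑ j, ∑ k, (x i * C k i) * (A i j * (x j * C k j)) := by
            refine Finset.sum_congr rfl fun i _ => ?_
            rw [Finset.mul_sum]
            refine Finset.sum_congr rfl fun j _ => ?_
            rw [hBij i j, Finset.mul_sum, Finset.sum_mul, Finset.mul_sum]
            refine Finset.sum_congr rfl fun k _ => by ring
        _ = ∑ k, ∑ i, ∑ j, (x i * C k i) * (A i j * (x j * C k j)) := by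
            rw [show (∑ i, ∑ j, ∑ k, (x i * C k i) * (A i j * (x j * C k j)))
                = ∑ i, ∑ k, ∑ j, (x i * C k i) * (A i j * (x j * C k j)) from
              Finset.sum_congr rfl fun i _ => Finset.sum_comm]
            exact Finset.sum_comm
        _ = ∑ k, ∑ i, (x i * C k i) * ∑ j, A i j * (x j * C k j) := by
            refine Finset.sum_congr rfl fun k _ => Finset.sum_congr rfl fun i _ => ?_
            rw [Finset.mul_sum]
    rw [key]
    exact Finset.sum_nonneg fun k _ => hA.2 _

/-- A Gram matrix of functions on `(0, ∞)` is positive semidefinite. -/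
lemma gram_psd {m : ℕ} (g : Fin m → ℝ → ℝ)
    (hint : ∀ i j, IntegrableOn (fun u => g i u * g j u) (Ioi (0:ℝ))) :
    (Matrix.of fun i j => ∫ u in Ioi (0:ℝ), g i u * g j u).PosSemidef := by
  rw [Matrix.posSemidef_iff_dotProduct_mulVec]
  constructor
  · ext i j
    simp only [Matrix.conjTranspose_apply, Matrix.of_apply, star_trivial]
    congr 1
    funext u
    ring
  · intro x
    have hterm : ∀ i j : Fin m,
        IntegrableOn (fun u => (x i * g i u) * (x j * g j u)) (Ioi (0:ℝ)) := by
      intro i j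
      exact MeasureTheory.IntegrableOn.congr_fun ((hint i j).const_mul (x i * x j))
        (fun u _ => by ring) measurableSet_Ioi
    have key : star x ⬝ᵥ ((Matrix.of fun i j => ∫ u in Ioi (0:ℝ), g i u * g j u) *ᵥ x)
        = ∫ u in Ioi (0:ℝ), (∑ i, x i * g i u) ^ 2 := by
      calc star x ⬝ᵥ ((Matrix.of fun i j => ∫ u in Ioi (0:ℝ), g i u * g j u) *ᵥ x)
          = ∑ i, ∑ j, ∫ u in Ioi (0:ℝ), (x i * g i u) * (x j * g j u) := by
            simp only [star_trivial, dotProduct, mulVec, Matrix.of_apply]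
            refine Finset.sum_congr rfl fun i _ => ?_
            rw [Finset.mul_sum]
            refine Finset.sum_congr rfl fun j _ => ?_
            rw [show x i * ((∫ u in Ioi (0:ℝ), g i u * g j u) * x j)
              = (x i * x j) * ∫ u in Ioi (0:ℝ), g i u * g j u by ring,
              ← MeasureTheory.integral_const_mul]
            congr 1
            funext u
            ring
        _ = ∫ u in Ioi (0:ℝ), ∑ i, ∑ j, (x i * g i u) * (x j * g j u) := by
            rw [MeasureTheory.integral_finset_sum]
            · refine Finset.sum_congr rfl fun i _ => ?_
              rw [MeasureTheory.integral_finset_sum]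
              intro j _
              exact hterm i j
            · intro i _
              exact MeasureTheory.integrable_finset_sum _ fun j _ => hterm i j
        _ = ∫ u in Ioi (0:ℝ), (∑ i, x i * g i u) ^ 2 := by
            congr 1
            funext u
            rw [sq, Finset.sum_mul_sum]
    rw [star_trivial] at key ⊢
    rw [key]
    exact MeasureTheory.setIntegral_nonneg measurableSet_Ioi fun u _ => sq_nonneg _

/-- Validity condition A3(a), the parsimonious case of the
flexible multivariate Matérn model: with `ν_{ij} = (ν_i + ν_j)/2` and
`a_{ij} = ((a_i² + a_j²)/2)^{1/2}`, if `(σ_{ij} a_{ij}^{2ν_{ij}}/Γ(ν_{ij}))` is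
positive semidefinite then the matrix of Matérn spectral densities is positive
semidefinite at every `λ ≥ 0`. -/
theorem flexible_matern_valid_A3a
    (m : ℕ) (hm : 1 ≤ m)
    (ν a : Fin m → ℝ) (hν : ∀ i, 0 < ν i) (ha : ∀ i, 0 < a i)
    (νm am : Fin m → Fin m → ℝ)
    (hνm : ∀ i j, νm i j = (ν i + ν j) / 2)
    (ham : ∀ i j, am i j = Real.sqrt ((a i ^ 2 + a j ^ 2) / 2))
    (σ : Matrix (Fin m) (Fin m) ℝ) (hσsym : σ.IsSymm)
    (hσ : (Matrix.of (fun i j =>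
      σ i j * am i j ^ (2 * νm i j) / Real.Gamma (νm i j) :
      Matrix (Fin m) (Fin m) ℝ)).PosSemidef) :
    ∀ l : ℝ, 0 ≤ l →
      (Matrix.of (fun i j =>
        σ i j * am i j ^ (2 * νm i j) * Real.Gamma (νm i j + 3/2) /
          Real.Gamma (νm i j) * (am i j ^ 2 + l ^ 2) ^ (-(νm i j + 3/2)) :
        Matrix (Fin m) (Fin m) ℝ)).PosSemidef := by
  intro l hl
  -- the Gram functions
  set g : Fin m → ℝ → ℝ := fun i u =>
    u ^ (ν i / 2 + 1/4) * Real.exp (-((a i ^ 2 + l ^ 2) / 2) * u) with hg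
  have hb : ∀ i, (0:ℝ) < (a i ^ 2 + l ^ 2) / 2 := fun i => by
    have := ha i; positivity
  -- each product is the standard Gamma-type integrand
  have hprod : ∀ (i j : Fin m), EqOn (fun u => g i u * g j u)
      (fun u => u ^ ((νm i j + 3/2) - 1) *
        Real.exp (-((am i j ^ 2 + l ^ 2) * u))) (Ioi (0:ℝ)) := by
    intro i j u hu
    have hu' : (0:ℝ) < u := hu
    have ham2 : am i j ^ 2 = (a i ^ 2 + a j ^ 2) / 2 := by
      rw [ham i j]
      exact Real.sq_sqrt (by positivity)
    simp only [hg]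
    rw [mul_mul_mul_comm, ← Real.rpow_add hu', ← Real.exp_add]
    congr 1
    · congr 1
      rw [hνm i j]
      ring
    · congr 1
      rw [ham2]
      ring
  have hint : ∀ i j, IntegrableOn (fun u => g i u * g j u) (Ioi (0:ℝ)) := by
    intro i j
    have h1 : IntegrableOn (fun u : ℝ => u ^ ((νm i j + 3/2) - 1) *
        Real.exp (-((am i j ^ 2 + l ^ 2) * u))) (Ioi (0:ℝ)) := by
      have ham2 : am i j ^ 2 = (a i ^ 2 + a j ^ 2) / 2 := by
        rw [ham i j]; exact Real.sq_sqrt (by positivity)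
      have hr : (0:ℝ) < am i j ^ 2 + l ^ 2 := by
        rw [ham2]; have := ha i; have := ha j; positivity
      have hs : (-1:ℝ) < (νm i j + 3/2) - 1 := by
        rw [hνm i j]; have := hν i; have := hν j; linarith
      have := integrableOn_rpow_mul_exp_neg_mul_rpow hs one_pos hr
      exact MeasureTheory.IntegrableOn.congr_fun this
        (fun u _ => by rw [Real.rpow_one, neg_mul]) measurableSet_Ioi
    exact (h1.congr_fun (fun u hu => (hprod i j hu).symm) measurableSet_Ioi)
  -- the Gram matrix entries
  have hentry : ∀ i j, (∫ u in Ioi (0:ℝ), g i u * g j u)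
      = Real.Gamma (νm i j + 3/2) * (am i j ^ 2 + l ^ 2) ^ (-(νm i j + 3/2)) := by
    intro i j
    have ham2 : am i j ^ 2 = (a i ^ 2 + a j ^ 2) / 2 := by
      rw [ham i j]; exact Real.sq_sqrt (by positivity)
    have hr : (0:ℝ) < am i j ^ 2 + l ^ 2 := by
      rw [ham2]; have := ha i; have := ha j; positivity
    have hA : (0:ℝ) < νm i j + 3/2 := by
      rw [hνm i j]; have := hν i; have := hν j; linarith
    rw [setIntegral_congr_fun measurableSet_Ioi (hprod i j)]
    rw [Real.integral_rpow_mul_exp_neg_mul_Ioi hA hr]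
    rw [one_div, Real.inv_rpow hr.le, ← Real.rpow_neg hr.le]
    ring
  have hK : (Matrix.of fun i j =>
      Real.Gamma (νm i j + 3/2) * (am i j ^ 2 + l ^ 2) ^ (-(νm i j + 3/2)) :
      Matrix (Fin m) (Fin m) ℝ).PosSemidef := by
    have := gram_psd g hint
    convert this using 2
    · funext i j
      exact (hentry i j).symm
  have := schur_product_psd hσ hK
  convert this using 2
  funext i j
  simp only [Matrix.of_apply]
  ring
end

section
/- Let m ≥ 1, let ν_1,…,ν_m > 0 and a_1,…,a_m > 0, and set ν_{ij} = (ν_i + ν_j)/2 and a_{ij} = ((a_i^{−2} + a_j^{−2})/2)^{−1/2}. Let (σ_{ij}) be a real symmetric m × m matrix such that the matrix with entries σ_{ij} a_{ij}^{−3} / Γ(ν_{ij}) is positive semidefinite. Then for every λ ≥ 0, the m × m matrix with entries σ_{ij} a_{ij}^{2ν_{ij}} Γ(ν_{ij} + 3/2)/Γ(ν_{ij}) · (a_{ij}² + λ²)^{−(ν_{ij} + 3/2)} is positive semidefinite. -/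
open Matrix Real MeasureTheory Set

lemma matern_integrable {p b : ℝ} (hp : 0 < p) (hb : 0 < b) :
    IntegrableOn (fun s : ℝ => s ^ (p - 1) * Real.exp (-(b * s))) (Ioi 0) := by
  have := integrableOn_rpow_mul_exp_neg_mul_rpow (p := 1) (s := p - 1) (b := b)
    (by linarith) one_pos hb
  refine this.congr_fun (fun s hs => ?_) measurableSet_Ioi
  simp [Real.rpow_one]

lemma matern_integral {p b : ℝ} (hp : 0 < p) (hb : 0 < b) :
    ∫ s in Ioi 0, s ^ (p - 1) * Real.exp (-(b * s)) = b ^ (-p) * Real.Gamma p := by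
  rw [Real.integral_rpow_mul_exp_neg_mul_Ioi hp hb, one_div, ← Real.rpow_neg_one,
    ← Real.rpow_mul hb.le, neg_one_mul]

/-- Validity condition A3(b), the parsimonious case of the
flexible multivariate Matérn model: with `ν_{ij} = (ν_i + ν_j)/2` and
`a_{ij} = ((a_i^{−2} + a_j^{−2})/2)^{−1/2}`, if `(σ_{ij} a_{ij}^{−3}/Γ(ν_{ij}))` is
positive semidefinite then the matrix of Matérn spectral densities is positive
semidefinite at every `λ ≥ 0`. -/
theorem flexible_matern_valid_A3b
    (m : ℕ) (hm : 1 ≤ m)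
    (ν a : Fin m → ℝ) (hν : ∀ i, 0 < ν i) (ha : ∀ i, 0 < a i)
    (νm am : Fin m → Fin m → ℝ)
    (hνm : ∀ i j, νm i j = (ν i + ν j) / 2)
    (ham : ∀ i j, am i j = ((a i ^ (-2 : ℝ) + a j ^ (-2 : ℝ)) / 2) ^ (-(1/2) : ℝ))
    (σ : Matrix (Fin m) (Fin m) ℝ) (hσsym : σ.IsSymm)
    (hσ : (Matrix.of (fun i j =>
      σ i j * am i j ^ (-3 : ℝ) / Real.Gamma (νm i j) :
      Matrix (Fin m) (Fin m) ℝ)).PosSemidef) :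
    ∀ l : ℝ, 0 ≤ l →
      (Matrix.of (fun i j =>
        σ i j * am i j ^ (2 * νm i j) * Real.Gamma (νm i j + 3/2) /
          Real.Gamma (νm i j) * (am i j ^ 2 + l ^ 2) ^ (-(νm i j + 3/2)) :
        Matrix (Fin m) (Fin m) ℝ)).PosSemidef := by
  intro l hl
  -- basic positivity facts
  have hmean : ∀ i j, 0 < (a i ^ (-2 : ℝ) + a j ^ (-2 : ℝ)) / 2 := by
    intro i j
    have h1 : 0 < a i ^ (-2 : ℝ) := Real.rpow_pos_of_pos (ha i) _
    have h2 : 0 < a j ^ (-2 : ℝ) := Real.rpow_pos_of_pos (ha j) _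
    linarith
  have ham_pos : ∀ i j, 0 < am i j := by
    intro i j
    rw [ham]
    exact Real.rpow_pos_of_pos (hmean i j) _
  have haminv : ∀ i j, am i j ^ (-2 : ℝ) = (a i ^ (-2 : ℝ) + a j ^ (-2 : ℝ)) / 2 := by
    intro i j
    rw [ham, ← Real.rpow_mul (hmean i j).le]
    norm_num
  have hνm_pos : ∀ i j, 0 < νm i j := by
    intro i j
    rw [hνm]
    have := hν i; have := hν j; linarith
  -- the rate constants
  set c : Fin m → ℝ := fun i => 1 + l ^ 2 * a i ^ (-2 : ℝ) with hc_def
  have hc : ∀ i, 0 < c i := by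
    intro i
    have h1 : 0 ≤ l ^ 2 * a i ^ (-2 : ℝ) :=
      mul_nonneg (sq_nonneg l) (Real.rpow_pos_of_pos (ha i) _).le
    simp only [hc_def]; linarith
  -- the functions
  set φ : Fin m → ℝ → ℝ :=
    fun i s => s ^ ((ν i + 1/2) / 2) * Real.exp (-(c i / 2 * s)) with hφ_def
  have hφprod : ∀ i j, EqOn (fun s => φ i s * φ j s)
      (fun s => s ^ ((νm i j + 3/2) - 1) * Real.exp (-((c i + c j) / 2 * s))) (Ioi 0) := by
    intro i j s hs
    simp only [hφ_def]
    rw [mul_mul_mul_comm, ← Real.rpow_add (mem_Ioi.mp hs), ← Real.exp_add, hνm]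
    ring_nf
  have hint : ∀ i j, IntegrableOn (fun s => φ i s * φ j s) (Ioi 0) := by
    intro i j
    have hb : 0 < (c i + c j) / 2 := div_pos (add_pos (hc i) (hc j)) two_pos
    exact ((matern_integrable (by have := hνm_pos i j; linarith) hb).congr_fun
      (hφprod i j).symm measurableSet_Ioi)
  have hGram : ∀ i j, ∫ s in Ioi 0, φ i s * φ j s
      = ((c i + c j) / 2) ^ (-(νm i j + 3/2)) * Real.Gamma (νm i j + 3/2) := by
    intro i j
    have hb : 0 < (c i + c j) / 2 := div_pos (add_pos (hc i) (hc j)) two_pos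
    rw [setIntegral_congr_fun measurableSet_Ioi (hφprod i j)]
    exact matern_integral (by have := hνm_pos i j; linarith) hb
  -- key entrywise identity
  have hkey : ∀ i j,
      σ i j * am i j ^ (2 * νm i j) * Real.Gamma (νm i j + 3/2) /
          Real.Gamma (νm i j) * (am i j ^ 2 + l ^ 2) ^ (-(νm i j + 3/2))
      = (σ i j * am i j ^ (-3 : ℝ) / Real.Gamma (νm i j)) *
          ∫ s in Ioi 0, φ i s * φ j s := by
    intro i j
    rw [hGram]
    have hr : (c i + c j) / 2 = am i j ^ (-2 : ℝ) * (am i j ^ 2 + l ^ 2) := by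
      have h2 : (am i j : ℝ) ^ (2 : ℕ) = am i j ^ (2 : ℝ) := by
        rw [← Real.rpow_natCast (am i j) 2]; norm_num
      have h3 : am i j ^ (-2 : ℝ) * am i j ^ (2 : ℝ) = 1 := by
        rw [← Real.rpow_add (ham_pos i j)]; norm_num
      have h4 : am i j ^ (-2 : ℝ) = (a i ^ (-2 : ℝ) + a j ^ (-2 : ℝ)) / 2 := haminv i j
      simp only [hc_def]
      rw [mul_add, h2, h3, h4]
      ring
    rw [hr, Real.mul_rpow (Real.rpow_pos_of_pos (ham_pos i j) _).le
      (by positivity), ← Real.rpow_mul (ham_pos i j).le]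
    have hpow : am i j ^ ((-2 : ℝ) * -(νm i j + 3/2)) =
        am i j ^ (2 * νm i j) * am i j ^ (3 : ℝ) := by
      rw [← Real.rpow_add (ham_pos i j)]; ring_nf
    have h33 : am i j ^ (-3 : ℝ) * am i j ^ (3 : ℝ) = 1 := by
      rw [← Real.rpow_add (ham_pos i j)]; norm_num
    rw [hpow]
    linear_combination (-(σ i j * am i j ^ (2 * νm i j) * Real.Gamma (νm i j + 3/2) /
      Real.Gamma (νm i j) * ((am i j ^ 2 + l ^ 2) ^ (-(νm i j + 3/2))))) * h33
  obtain ⟨B, hB⟩ : ∃ B : Matrix (Fin m) (Fin m) ℝ, Matrix.of (fun i j =>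
      σ i j * am i j ^ (-3 : ℝ) / Real.Gamma (νm i j)) = Bᴴ * B := by
    open scoped MatrixOrder Matrix.Norms.L2Operator in
    exact CStarAlgebra.nonneg_iff_eq_star_mul_self.mp hσ.nonneg
  have hM : ∀ i j, σ i j * am i j ^ (-3 : ℝ) / Real.Gamma (νm i j) = ∑ k, B k i * B k j := by
    intro i j
    have h := congrFun (congrFun hB i) j
    simpa [Matrix.mul_apply, Matrix.conjTranspose_apply] using h
  constructor
  · -- Hermitian
    show _ = _
    ext i j
    simp only [Matrix.conjTranspose_apply, Matrix.of_apply, star_trivial]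
    have h1 : σ j i = σ i j := hσsym.apply i j
    have h2 : νm j i = νm i j := by rw [hνm, hνm]; ring
    have h3 : am j i = am i j := by rw [ham, ham, add_comm]
    rw [h1, h2, h3]
  · intro x
    simp only [star_trivial, dotProduct, mulVec, Matrix.of_apply]
    have hsq : ∀ k : Fin m, ∫ s in Ioi 0, (∑ i, x i * B k i * φ i s) ^ 2
        = ∑ i, ∑ j, x i * B k i * (x j * B k j) * ∫ s in Ioi 0, φ i s * φ j s := by
      intro k
      have h1 : ∀ s : ℝ, (∑ i, x i * B k i * φ i s) ^ 2
          = ∑ i, ∑ j, x i * B k i * (x j * B k j) * (φ i s * φ j s) := by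
        intro s
        rw [sq, Finset.sum_mul_sum]
        exact Finset.sum_congr rfl fun i _ => Finset.sum_congr rfl fun j _ => by ring
      simp_rw [h1]
      rw [MeasureTheory.integral_finset_sum _
        (fun i _ => integrable_finset_sum _ (fun j _ => (hint i j).const_mul _))]
      refine Finset.sum_congr rfl fun i _ => ?_
      rw [MeasureTheory.integral_finset_sum _ (fun j _ => (hint i j).const_mul _)]
      exact Finset.sum_congr rfl fun j _ => MeasureTheory.integral_const_mul _ _
    have step : ∑ i, x i * ∑ j, (σ i j * am i j ^ (2 * νm i j) * Real.Gamma (νm i j + 3/2) /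
            Real.Gamma (νm i j) * (am i j ^ 2 + l ^ 2) ^ (-(νm i j + 3/2))) * x j
        = ∑ k, ∫ s in Ioi 0, (∑ i, x i * B k i * φ i s) ^ 2 := by
      calc ∑ i, x i * ∑ j, (σ i j * am i j ^ (2 * νm i j) * Real.Gamma (νm i j + 3/2) /
              Real.Gamma (νm i j) * (am i j ^ 2 + l ^ 2) ^ (-(νm i j + 3/2))) * x j
          = ∑ i, ∑ j, ∑ k, x i * B k i * (x j * B k j) * ∫ s in Ioi 0, φ i s * φ j s := by
            refine Finset.sum_congr rfl fun i _ => ?_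
            rw [Finset.mul_sum]
            refine Finset.sum_congr rfl fun j _ => ?_
            rw [hkey i j, hM i j]
            simp only [Finset.sum_mul, Finset.mul_sum]
            exact Finset.sum_congr rfl fun k _ => by ring
        _ = ∑ i, ∑ k, ∑ j, x i * B k i * (x j * B k j) * ∫ s in Ioi 0, φ i s * φ j s :=
            Finset.sum_congr rfl fun i _ => Finset.sum_comm
        _ = ∑ k, ∑ i, ∑ j, x i * B k i * (x j * B k j) * ∫ s in Ioi 0, φ i s * φ j s :=
            Finset.sum_comm
        _ = ∑ k, ∫ s in Ioi 0, (∑ i, x i * B k i * φ i s) ^ 2 :=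
            Finset.sum_congr rfl fun k _ => (hsq k).symm
    simp only [Finsupp.sum_fintype, mul_zero, zero_mul, implies_true, Finset.sum_const_zero]
    simp only [Finset.mul_sum, ← mul_assoc] at step ⊢
    rw [step]
    exact Finset.sum_nonneg fun k _ => MeasureTheory.integral_nonneg fun s => sq_nonneg _
end

section
/- Let C¹ = [[0, 0], [0, 1]], C² = (1/4)[[1, √3], [√3, 3]], and C³ = (1/4)[[1, −√3], [−√3, 3]], and let Φ₁, Φ₂, Φ₃ be finite Borel measures on [0,∞). Define the 2×2-matrix-valued kernel B(x,y) = ∑_{m=1}^{3} (∫₀^∞ sinc(λ‖y−x‖) dΦ_m(λ)) C^m for x, y ∈ ℝ³. Then B is a positive semidefinite matrix-valued kernel: for every finite collection of points x_1,…,x_N ∈ ℝ³ and vectors c_1,…,c_N ∈ ℝ², one has ∑_{j,k} c_jᵀ B(x_j, x_k) c_k ≥ 0. -/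
open MeasureTheory Matrix

noncomputable def sinc (t : ℝ) : ℝ := if t = 0 then 1 else Real.sin t / t

open Real hiding sinc sinc_zero abs_sinc_le_one measurable_sinc
open Set

local notation "E3" => EuclideanSpace ℝ (Fin 3)

lemma sinc_zero : sinc 0 = 1 := if_pos rfl

lemma abs_sinc_le_one (t : ℝ) : |sinc t| ≤ 1 := by
  unfold sinc
  split_ifs with h
  · simp
  · rw [abs_div]
    exact div_le_one_of_le₀ Real.abs_sin_le_abs (abs_nonneg _)

lemma measurable_sinc : Measurable sinc := by
  unfold sinc
  exact Measurable.ite (measurableSet_eq) measurable_const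
    (Real.measurable_sin.div measurable_id)

-- lemma T
lemma integral_t (d u : ℝ) (hu : 0 < u) :
    ∫ t in Ioo (-u) u, u * Real.cos (d * t / u) = 2 * u ^ 2 * sinc d := by
  have h1 : ∫ t in Ioo (-u) u, u * Real.cos (d * t / u)
      = ∫ t in (-u)..u, u * Real.cos (d * t / u) := by
    rw [intervalIntegral.integral_of_le (by linarith), integral_Ioc_eq_integral_Ioo]
  rw [h1]
  rcases eq_or_ne d 0 with rfl | hd
  · simp only [zero_mul, zero_div, Real.cos_zero, mul_one, sinc_zero]
    rw [intervalIntegral.integral_const, smul_eq_mul]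
    ring
  · have hu' : u ≠ 0 := ne_of_gt hu
    have h2 : ∀ t : ℝ, d * t / u = (d / u) * t := fun t => by ring
    simp_rw [h2]
    rw [intervalIntegral.integral_const_mul]
    rw [show (fun t => Real.cos (d / u * t)) = fun t => Real.cos (d / u * t) from rfl]
    rw [intervalIntegral.integral_comp_mul_left (a := -u) (b := u) Real.cos (div_ne_zero hd hu'),
      integral_cos, smul_eq_mul]
    have : d / u * u = d := by field_simp
    rw [this]
    have : d / u * (-u) = -d := by field_simp
    rw [this, Real.sin_neg]
    rw [show sinc d = Real.sin d / d from if_neg hd]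
    field_simp
    ring

lemma cont_g (c : ℝ) : Continuous (fun u : ℝ => u * Real.cos (c / u)) := by
  rw [continuous_iff_continuousAt]
  intro u
  rcases eq_or_ne u 0 with rfl | hu
  · have h0 : (fun u : ℝ => u * Real.cos (c / u)) 0 = 0 := by simp
    unfold ContinuousAt
    rw [h0]
    refine squeeze_zero_norm (a := fun u : ℝ => |u|) (fun x => ?_)
      (by simpa using continuous_abs.tendsto' 0 0 abs_zero)
    rw [Real.norm_eq_abs, abs_mul]
    calc |x| * |Real.cos (c / x)| ≤ |x| * 1 :=
          mul_le_mul_of_nonneg_left (Real.abs_cos_le_one _) (abs_nonneg _)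
      _ = |x| := mul_one _
  · exact (continuousAt_id.mul ((Real.continuous_cos.continuousAt).comp
      (continuousAt_const.div continuousAt_id hu)))

lemma radial (d t : ℝ) :
    (∫ r in Ioi (0:ℝ),
        r * (if r ^ 2 + t ^ 2 < 1 then Real.cos (d * t / Real.sqrt (r ^ 2 + t ^ 2)) else 0))
      = ∫ u in Ioc |t| 1, u * Real.cos (d * t / u) := by
  rcases le_or_gt 1 |t| with h1 | h1
  · have hIoc : Ioc |t| 1 = ∅ := Ioc_eq_empty (not_lt.2 h1)
    have habs : (1:ℝ) ≤ t ^ 2 := by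
      have := abs_nonneg t
      nlinarith [sq_abs t]
    have hz : ∀ r : ℝ,
        r * (if r ^ 2 + t ^ 2 < 1 then Real.cos (d * t / Real.sqrt (r ^ 2 + t ^ 2)) else 0) = 0 := by
      intro r
      rw [if_neg (by nlinarith [sq_nonneg r]), mul_zero]
    simp only [hz, hIoc]
    simp
  · -- |t| < 1
    have ht2 : t ^ 2 < 1 := by nlinarith [sq_abs t, abs_nonneg t]
    set R := Real.sqrt (1 - t ^ 2) with hRdef
    have hR : 0 < R := Real.sqrt_pos.2 (by linarith)
    have hRsq : R ^ 2 = 1 - t ^ 2 := Real.sq_sqrt (by linarith)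
    have step1 : (∫ r in Ioi (0:ℝ),
        r * (if r ^ 2 + t ^ 2 < 1 then Real.cos (d * t / Real.sqrt (r ^ 2 + t ^ 2)) else 0))
        = ∫ r in Ioo (0:ℝ) R, r * Real.cos (d * t / Real.sqrt (r ^ 2 + t ^ 2)) := by
      rw [setIntegral_congr_fun measurableSet_Ioi
        (g := (Ioo (0:ℝ) R).indicator (fun r => r * Real.cos (d * t / Real.sqrt (r ^ 2 + t ^ 2))))]
      · rw [setIntegral_indicator measurableSet_Ioo,
          inter_eq_self_of_subset_right Ioo_subset_Ioi_self]
      · intro r hr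
        simp only [mem_Ioi] at hr
        dsimp only
        by_cases hcond : r < R
        · rw [if_pos, indicator_of_mem (mem_Ioo.2 ⟨hr, hcond⟩)]
          have := (Real.lt_sqrt hr.le).1 hcond
          linarith
        · rw [if_neg, indicator_of_notMem (by simp [mem_Ioo, hcond]), mul_zero]
          intro hlt
          exact hcond ((Real.lt_sqrt hr.le).2 (by linarith))
    rw [step1]
    rcases eq_or_ne t 0 with rfl | ht
    · simp only [mul_zero, zero_mul, zero_div, Real.cos_zero, mul_one, abs_zero]
      rw [show R = 1 by simp [hRdef], integral_Ioc_eq_integral_Ioo]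
    · have hpos : ∀ x : ℝ, (0:ℝ) < x ^ 2 + t ^ 2 := fun x => by positivity
      have hsne : ∀ x : ℝ, Real.sqrt (x ^ 2 + t ^ 2) ≠ 0 :=
        fun x => ne_of_gt (Real.sqrt_pos.2 (hpos x))
      have hint1 : ∫ r in Ioo (0:ℝ) R, r * Real.cos (d * t / Real.sqrt (r ^ 2 + t ^ 2))
          = ∫ r in (0:ℝ)..R, r * Real.cos (d * t / Real.sqrt (r ^ 2 + t ^ 2)) := by
        rw [intervalIntegral.integral_of_le hR.le, integral_Ioc_eq_integral_Ioo]
      have hint2 : ∫ u in Ioc |t| 1, u * Real.cos (d * t / u)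
          = ∫ u in |t|..1, u * Real.cos (d * t / u) := by
        rw [intervalIntegral.integral_of_le h1.le]
      rw [hint1, hint2]
      have hderiv : ∀ x ∈ uIcc (0:ℝ) R,
          HasDerivAt (fun x : ℝ => Real.sqrt (x ^ 2 + t ^ 2))
            (x / Real.sqrt (x ^ 2 + t ^ 2)) x := by
        intro x _
        have h := (Real.hasDerivAt_sqrt (ne_of_gt (hpos x))).comp x
          ((hasDerivAt_pow 2 x).add_const (t ^ 2))
        refine h.congr_deriv ?_
        field_simp
        ring
      have hcont : ContinuousOn (fun x : ℝ => x / Real.sqrt (x ^ 2 + t ^ 2)) (uIcc (0:ℝ) R) := by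
        apply Continuous.continuousOn
        exact continuous_id.div
          (Real.continuous_sqrt.comp ((continuous_pow 2).add continuous_const))
          (fun x => hsne x)
      have hgc : Continuous (fun u : ℝ => u * Real.cos (d * t / u)) := cont_g (d * t)
      have hsub := intervalIntegral.integral_comp_smul_deriv hderiv hcont hgc
      simp only [Function.comp_apply, smul_eq_mul] at hsub
      have heq : ∀ x : ℝ, x / Real.sqrt (x ^ 2 + t ^ 2) *
            (Real.sqrt (x ^ 2 + t ^ 2) * Real.cos (d * t / Real.sqrt (x ^ 2 + t ^ 2)))
          = x * Real.cos (d * t / Real.sqrt (x ^ 2 + t ^ 2)) := by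
        intro x
        field_simp
      simp only [heq] at hsub
      have h0 : Real.sqrt ((0:ℝ) ^ 2 + t ^ 2) = |t| := by
        simp [Real.sqrt_sq_eq_abs]
      have hr1 : Real.sqrt (R ^ 2 + t ^ 2) = 1 := by
        rw [hRsq]
        simp
      rw [h0, hr1] at hsub
      rw [hsub]

noncomputable def Ff (d : ℝ) (p : ℝ × ℝ × ℝ) : ℝ :=
  if p.2.1 ^ 2 + p.2.2 ^ 2 + p.1 ^ 2 < 1 then
    Real.cos (d * p.1 / Real.sqrt (p.2.1 ^ 2 + p.2.2 ^ 2 + p.1 ^ 2)) else 0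

noncomputable def Kf (d : ℝ) (q : ℝ × ℝ) : ℝ :=
  if |q.1| < q.2 ∧ q.2 ≤ 1 then q.2 * Real.cos (d * q.1 / q.2) else 0

lemma measurable_Ff (d : ℝ) : Measurable (Ff d) := by
  unfold Ff
  have hm : Measurable fun p : ℝ × ℝ × ℝ => p.2.1 ^ 2 + p.2.2 ^ 2 + p.1 ^ 2 :=
    (((measurable_fst.comp measurable_snd).pow_const 2).add
      ((measurable_snd.comp measurable_snd).pow_const 2)).add (measurable_fst.pow_const 2)
  exact Measurable.ite (measurableSet_lt hm measurable_const)
    (Real.measurable_cos.comp ((measurable_const.mul measurable_fst).div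
      (Real.continuous_sqrt.measurable.comp hm))) measurable_const

lemma integrable_Ff (d : ℝ) : Integrable (Ff d) := by
  have hm : Measurable fun p : ℝ × ℝ × ℝ => p.2.1 ^ 2 + p.2.2 ^ 2 + p.1 ^ 2 :=
    (((measurable_fst.comp measurable_snd).pow_const 2).add
      ((measurable_snd.comp measurable_snd).pow_const 2)).add (measurable_fst.pow_const 2)
  have hS : MeasurableSet {p : ℝ × ℝ × ℝ | p.2.1 ^ 2 + p.2.2 ^ 2 + p.1 ^ 2 < 1} :=
    measurableSet_lt hm measurable_const
  have hsub : {p : ℝ × ℝ × ℝ | p.2.1 ^ 2 + p.2.2 ^ 2 + p.1 ^ 2 < 1}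
      ⊆ Ioo (-1:ℝ) 1 ×ˢ (Ioo (-1:ℝ) 1 ×ˢ Ioo (-1:ℝ) 1) := by
    rintro ⟨t, a, b⟩ hp
    simp only [mem_setOf_eq] at hp
    refine ⟨⟨by nlinarith [sq_nonneg a, sq_nonneg b, sq_nonneg (t+1)],
      by nlinarith [sq_nonneg a, sq_nonneg b, sq_nonneg (t-1)]⟩,
      ⟨by nlinarith [sq_nonneg t, sq_nonneg b, sq_nonneg (a+1)],
      by nlinarith [sq_nonneg t, sq_nonneg b, sq_nonneg (a-1)]⟩,
      ⟨by nlinarith [sq_nonneg t, sq_nonneg a, sq_nonneg (b+1)],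
      by nlinarith [sq_nonneg t, sq_nonneg a, sq_nonneg (b-1)]⟩⟩
  have hvol : volume {p : ℝ × ℝ × ℝ | p.2.1 ^ 2 + p.2.2 ^ 2 + p.1 ^ 2 < 1} < ⊤ := by
    refine lt_of_le_of_lt (measure_mono hsub) ?_
    rw [Measure.volume_eq_prod, Measure.prod_prod, Measure.volume_eq_prod, Measure.prod_prod]
    simp [Real.volume_Ioo]
    exact ENNReal.mul_lt_top ENNReal.ofReal_lt_top (ENNReal.mul_lt_top ENNReal.ofReal_lt_top ENNReal.ofReal_lt_top)
  have hF_eq : Ff d = ({p : ℝ × ℝ × ℝ | p.2.1 ^ 2 + p.2.2 ^ 2 + p.1 ^ 2 < 1}).indicator (Ff d) := by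
    funext p
    by_cases h : p ∈ {p : ℝ × ℝ × ℝ | p.2.1 ^ 2 + p.2.2 ^ 2 + p.1 ^ 2 < 1}
    · rw [indicator_of_mem h]
    · rw [indicator_of_notMem h]
      exact if_neg h
  rw [hF_eq, integrable_indicator_iff hS]
  refine Integrable.mono' (g := fun _ => (1:ℝ))
    (integrableOn_const hvol.ne) ((measurable_Ff d).aestronglyMeasurable.restrict) ?_
  filter_upwards with p
  rw [Real.norm_eq_abs]
  unfold Ff
  split_ifs with h
  · exact Real.abs_cos_le_one _
  · simp

lemma integrable_Kf (d : ℝ) : Integrable (Kf d) := by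
  have hS : MeasurableSet {q : ℝ × ℝ | |q.1| < q.2 ∧ q.2 ≤ 1} := by
    refine MeasurableSet.inter ?_ ?_
    · exact measurableSet_lt (measurable_fst.abs) measurable_snd
    · exact measurableSet_le measurable_snd measurable_const
  have hsub : {q : ℝ × ℝ | |q.1| < q.2 ∧ q.2 ≤ 1} ⊆ Ioo (-1:ℝ) 1 ×ˢ Ioc (0:ℝ) 1 := by
    rintro ⟨t, u⟩ ⟨h1, h2⟩
    have h3 := abs_nonneg t
    have h4 := abs_lt.1 (h1.trans_le h2)
    exact ⟨⟨h4.1, h4.2⟩, ⟨lt_of_le_of_lt h3 h1, h2⟩⟩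
  have hvol : volume {q : ℝ × ℝ | |q.1| < q.2 ∧ q.2 ≤ 1} < ⊤ := by
    refine lt_of_le_of_lt (measure_mono hsub) ?_
    rw [Measure.volume_eq_prod, Measure.prod_prod]
    simp [Real.volume_Ioo, Real.volume_Ioc]
  have hKm : Measurable (Kf d) := by
    unfold Kf
    exact Measurable.ite hS (measurable_snd.mul (Real.measurable_cos.comp
      ((measurable_const.mul measurable_fst).div measurable_snd))) measurable_const
  have hK_eq : Kf d = ({q : ℝ × ℝ | |q.1| < q.2 ∧ q.2 ≤ 1}).indicator (Kf d) := by
    funext q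
    by_cases h : q ∈ {q : ℝ × ℝ | |q.1| < q.2 ∧ q.2 ≤ 1}
    · rw [indicator_of_mem h]
    · rw [indicator_of_notMem h]
      exact if_neg h
  rw [hK_eq, integrable_indicator_iff hS]
  refine Integrable.mono' (g := fun _ => (1:ℝ))
    (integrableOn_const hvol.ne) (hKm.aestronglyMeasurable.restrict) ?_
  filter_upwards with q
  rw [Real.norm_eq_abs]
  unfold Kf
  split_ifs with h
  · obtain ⟨h1, h2⟩ := h
    have h3 : 0 < q.2 := lt_of_le_of_lt (abs_nonneg _) h1
    rw [abs_mul]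
    calc |q.2| * |Real.cos (d * q.1 / q.2)| ≤ |q.2| * 1 :=
          mul_le_mul_of_nonneg_left (Real.abs_cos_le_one _) (abs_nonneg _)
      _ = q.2 := by rw [mul_one, abs_of_pos h3]
      _ ≤ 1 := h2
  · simp

lemma L1'' (d : ℝ) : ∫ p : ℝ × ℝ × ℝ, Ff d p = (4 * π / 3) * sinc d := by
  have step1 : ∫ p : ℝ × ℝ × ℝ, Ff d p = ∫ t : ℝ, ∫ q : ℝ × ℝ, Ff d (t, q) := by
    rw [Measure.volume_eq_prod]
    exact integral_prod _ (by rw [← Measure.volume_eq_prod]; exact integrable_Ff d)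
  have inner1 : ∀ t : ℝ, ∫ q : ℝ × ℝ, Ff d (t, q)
      = (∫ u in Ioc |t| 1, u * Real.cos (d * t / u)) * (2 * π) := by
    intro t
    rw [← integral_comp_polarCoord_symm (fun q => Ff d (t, q))]
    have hpt : ∀ p ∈ polarCoord.target,
        p.1 • Ff d (t, polarCoord.symm p)
          = (fun r => r * (if r ^ 2 + t ^ 2 < 1 then
              Real.cos (d * t / Real.sqrt (r ^ 2 + t ^ 2)) else 0)) p.1 * (fun _ : ℝ => (1:ℝ)) p.2 := by
      rintro ⟨r, θ⟩ _
      have hsq : (r * Real.cos θ) ^ 2 + (r * Real.sin θ) ^ 2 + t ^ 2 = r ^ 2 + t ^ 2 := by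
        linear_combination (r ^ 2) * Real.sin_sq_add_cos_sq θ
      simp only [polarCoord_symm_apply, Ff, smul_eq_mul, mul_one]
      rw [hsq]
    rw [setIntegral_congr_fun polarCoord.open_target.measurableSet hpt]
    have htarget : polarCoord.target = Ioi (0:ℝ) ×ˢ Ioo (-π) π := rfl
    rw [htarget, Measure.volume_eq_prod, ← Measure.prod_restrict]
    rw [integral_prod_mul (μ := volume.restrict (Ioi (0:ℝ))) (ν := volume.restrict (Ioo (-π) π))
      (f := fun r : ℝ => r * (if r ^ 2 + t ^ 2 < 1 then
        Real.cos (d * t / Real.sqrt (r ^ 2 + t ^ 2)) else 0)) (g := fun _ : ℝ => (1:ℝ))]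
    rw [radial d t]
    congr 1
    rw [integral_const, smul_eq_mul, mul_one, Measure.real, Measure.restrict_apply_univ, Real.volume_Ioo]
    rw [ENNReal.toReal_ofReal (by linarith [Real.pi_pos])]
    ring
  rw [step1]
  have step2 : ∫ t : ℝ, ∫ q : ℝ × ℝ, Ff d (t, q)
      = (∫ t : ℝ, ∫ u : ℝ, Kf d (t, u)) * (2 * π) := by
    rw [← integral_mul_const]
    congr 1
    funext t
    rw [inner1 t]
    congr 1
    rw [← integral_indicator measurableSet_Ioc]
    congr 1
    funext u
    by_cases h : u ∈ Ioc |t| 1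
    · rw [indicator_of_mem h]
      exact (if_pos (mem_Ioc.1 h)).symm
    · rw [indicator_of_notMem h]
      exact (if_neg (fun hc => h (mem_Ioc.2 hc))).symm
  rw [step2]
  have step3 : ∫ t : ℝ, ∫ u : ℝ, Kf d (t, u) = ∫ u : ℝ, ∫ t : ℝ, Kf d (t, u) := by
    apply integral_integral_swap
    have : Function.uncurry (fun t u => Kf d (t, u)) = Kf d := by
      funext q
      rfl
    rw [this, ← Measure.volume_eq_prod]
    exact integrable_Kf d
  rw [step3]
  have step4 : ∀ u : ℝ, ∫ t : ℝ, Kf d (t, u)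
      = (Ioc (0:ℝ) 1).indicator (fun u => 2 * u ^ 2 * sinc d) u := by
    intro u
    by_cases hu : 0 < u ∧ u ≤ 1
    · rw [indicator_of_mem (mem_Ioc.2 hu)]
      have hpt : ∀ t : ℝ, Kf d (t, u)
          = (Ioo (-u) u).indicator (fun t => u * Real.cos (d * t / u)) t := by
        intro t
        unfold Kf
        by_cases h : |t| < u
        · rw [if_pos ⟨h, hu.2⟩, indicator_of_mem (by rw [mem_Ioo, ← abs_lt]; exact h)]
        · rw [if_neg (fun hc => h hc.1), indicator_of_notMem (by rw [mem_Ioo, ← abs_lt]; exact h)]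
      simp only [hpt]
      rw [integral_indicator measurableSet_Ioo]
      exact integral_t d u hu.1
    · rw [indicator_of_notMem (fun hc => hu (mem_Ioc.1 hc))]
      have hpt : ∀ t : ℝ, Kf d (t, u) = 0 := by
        intro t
        unfold Kf
        rw [if_neg]
        intro ⟨h1, h2⟩
        exact hu ⟨lt_of_le_of_lt (abs_nonneg t) h1, h2⟩
      simp only [hpt]
      simp
  simp only [step4]
  rw [integral_indicator measurableSet_Ioc,
    ← intervalIntegral.integral_of_le (zero_le_one)]
  simp_rw [show ∀ u : ℝ, 2 * u ^ 2 * sinc d = (2 * sinc d) * u ^ 2 from fun u => by ring]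
  rw [intervalIntegral.integral_const_mul, integral_pow]
  norm_num
  ring

lemma L1' (d : ℝ) : ∫ x : Fin 3 → ℝ, Ff d (x 2, x 0, x 1) = (4 * π / 3) * sinc d := by
  have h1 : MeasurePreserving (MeasurableEquiv.piFinSuccAbove (fun _ : Fin 3 => ℝ) 2) :=
    volume_preserving_piFinSuccAbove (fun _ : Fin 3 => ℝ) 2
  have h2 : MeasurePreserving
      ((MeasurableEquiv.refl ℝ).prodCongr (MeasurableEquiv.finTwoArrow (α := ℝ)))
      volume volume := by
    have := (MeasurePreserving.id (volume : Measure ℝ)).prod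
      (volume_preserving_finTwoArrow ℝ)
    rw [← Measure.volume_eq_prod, ← Measure.volume_eq_prod] at this
    exact this
  have hψ := h2.comp h1
  have := hψ.integral_comp
    ((MeasurableEquiv.piFinSuccAbove (fun _ : Fin 3 => ℝ) 2).trans
      ((MeasurableEquiv.refl ℝ).prodCongr (MeasurableEquiv.finTwoArrow (α := ℝ)))).measurableEmbedding
    (Ff d)
  rw [← L1'' d, ← this]
  congr 1

lemma L1 (d : ℝ) :
    ∫ y in Metric.ball (0:E3) 1, Real.cos (d * y 2 / ‖y‖) = (4 * π / 3) * sinc d := by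
  rw [← integral_indicator measurableSet_ball]
  have hmp := (EuclideanSpace.volume_preserving_symm_measurableEquiv_toLp (Fin 3)).symm
  have hint := hmp.integral_comp (MeasurableEquiv.measurableEmbedding _)
    ((Metric.ball (0:E3) 1).indicator (fun y => Real.cos (d * y 2 / ‖y‖)))
  rw [← hint, ← L1' d]
  congr 1
  funext x
  set y : E3 := (MeasurableEquiv.toLp 2 (Fin 3 → ℝ)).symm.symm x with hy
  have happ : ∀ i, y i = x i := by
    intro i
    rw [hy]; rfl
  have hnorm : ‖y‖ = Real.sqrt ((x 0) ^ 2 + (x 1) ^ 2 + (x 2) ^ 2) := by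
    rw [EuclideanSpace.norm_eq]
    congr 1
    rw [Fin.sum_univ_three, happ 0, happ 1, happ 2]
    simp [Real.norm_eq_abs, sq_abs]
  by_cases h : (x 0) ^ 2 + (x 1) ^ 2 + (x 2) ^ 2 < 1
  · rw [indicator_of_mem]
    · show Real.cos (d * y 2 / ‖y‖) = Ff d (x 2, x 0, x 1)
      rw [happ 2, hnorm]
      unfold Ff
      rw [if_pos h]
    · rw [mem_ball_zero_iff, hnorm]
      refine (Real.sqrt_lt' one_pos).2 ?_
      simpa using h
  · rw [indicator_of_notMem]
    · unfold Ff
      rw [if_neg h]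
    · rw [mem_ball_zero_iff, hnorm]
      intro hc
      exact h (by simpa using (Real.sqrt_lt' one_pos).1 hc)

open RealInnerProductSpace

lemma L2 (c : ℝ) (w : E3) :
    ∫ y in Metric.ball (0:E3) 1, Real.cos (c * ⟪(‖y‖⁻¹ • y : E3), w⟫)
      = (4 * π / 3) * sinc (c * ‖w‖) := by
  rcases eq_or_ne w 0 with rfl | hw
  · simp only [inner_zero_right, mul_zero, Real.cos_zero, norm_zero]
    have := L1 0
    simp only [zero_mul, zero_div, Real.cos_zero] at this
    exact this
  · have hwn : ‖w‖ ≠ 0 := norm_ne_zero_iff.2 hw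
    set wh : E3 := ‖w‖⁻¹ • w with hwh
    have hwhn : ‖wh‖ = 1 := by
      rw [hwh, norm_smul, norm_inv, norm_norm]
      field_simp
    set b : E3 := EuclideanSpace.single (2 : Fin 3) (1:ℝ) with hb
    have hbn : ‖b‖ = 1 := by rw [hb, EuclideanSpace.norm_single]; norm_num
    set e := (Submodule.reflection (ℝ ∙ (b - wh))ᗮ) with he
    have heb : e b = wh := Submodule.reflection_sub (by rw [hbn, hwhn])
    have hep : MeasurePreserving (⇑e) := e.measurePreserving
    have hpre : (⇑e) ⁻¹' (Metric.ball (0:E3) 1) = Metric.ball (0:E3) 1 := by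
      ext z
      simp only [mem_preimage, mem_ball_zero_iff, e.norm_map]
    have hres := hep.restrict_preimage (measurableSet_ball (x := (0:E3)) (ε := (1:ℝ)))
    rw [hpre] at hres
    have hie := hres.integral_comp (e.toHomeomorph.measurableEmbedding)
      (fun y : E3 => Real.cos (c * ⟪(‖y‖⁻¹ • y : E3), w⟫))
    rw [← hie]
    have hpt : ∀ z : E3, Real.cos (c * ⟪(‖(e z)‖⁻¹ • (e z) : E3), w⟫)
        = Real.cos ((c * ‖w‖) * z 2 / ‖z‖) := by
      intro z
      have h1 : ‖e z‖ = ‖z‖ := e.norm_map z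
      have h2 : ⟪(e z : E3), w⟫ = ‖w‖ * z 2 := by
        have hw' : w = ‖w‖ • wh := by
          rw [hwh, smul_smul]
          field_simp
          rw [one_smul]
        conv_lhs => rw [hw', ← heb]
        rw [real_inner_smul_right, e.inner_map_map, hb, EuclideanSpace.inner_single_right]
        simp
      rw [real_inner_smul_left, h1, h2]
      congr 1
      rw [div_eq_mul_inv]
      ring
    simp_rw [hpt]
    exact L1 (c * ‖w‖)

lemma L3 (c : ℝ) (N : ℕ) (x : Fin N → E3) (a : Fin N → ℝ) :
    0 ≤ ∑ j, ∑ k, a j * a k * sinc (c * ‖x k - x j‖) := by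
  have hpi := Real.pi_pos
  have hV : (0:ℝ) < 4 * π / 3 := by linarith
  set u : E3 → E3 := fun y => ‖y‖⁻¹ • y with hu
  set f : E3 → Fin N → ℝ := fun y j => c * ⟪u y, x j⟫ with hf
  have hum : Measurable u := (measurable_norm.inv).smul measurable_id
  have hfm : ∀ j, Measurable (fun y => f y j) :=
    fun j => measurable_const.mul (hum.inner measurable_const)
  have hterm : ∀ j k : Fin N, (4 * π / 3) * (a j * a k * sinc (c * ‖x k - x j‖))
      = ∫ y in Metric.ball (0:E3) 1, (a j * a k) * Real.cos (f y k - f y j) := by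
    intro j k
    calc (4 * π / 3) * (a j * a k * sinc (c * ‖x k - x j‖))
        = (a j * a k) * ((4 * π / 3) * sinc (c * ‖x k - x j‖)) := by ring
      _ = (a j * a k) * ∫ y in Metric.ball (0:E3) 1, Real.cos (c * ⟪(‖y‖⁻¹ • y : E3), x k - x j⟫) := by
          rw [L2 c (x k - x j)]
      _ = ∫ y in Metric.ball (0:E3) 1, (a j * a k) * Real.cos (c * ⟪(‖y‖⁻¹ • y : E3), x k - x j⟫) :=
          (integral_const_mul _ _).symm
      _ = ∫ y in Metric.ball (0:E3) 1, (a j * a k) * Real.cos (f y k - f y j) := by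
          congr 1
          funext y
          congr 1
          rw [hf, hu]
          dsimp only
          rw [inner_sub_right]
          ring
  have hint : ∀ j k : Fin N, Integrable (fun y : E3 => (a j * a k) * Real.cos (f y k - f y j))
      (volume.restrict (Metric.ball (0:E3) 1)) := by
    intro j k
    refine Integrable.mono' (g := fun _ => |a j * a k|)
      (integrableOn_const measure_ball_lt_top.ne) ?_ ?_
    · exact (measurable_const.mul
        (Real.measurable_cos.comp ((hfm k).sub (hfm j)))).aestronglyMeasurable
    · filter_upwards with y
      rw [Real.norm_eq_abs, abs_mul]
      calc |a j * a k| * |Real.cos (f y k - f y j)| ≤ |a j * a k| * 1 :=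
            mul_le_mul_of_nonneg_left (Real.abs_cos_le_one _) (abs_nonneg _)
        _ = |a j * a k| := mul_one _
  have hsum : (4 * π / 3) * (∑ j, ∑ k, a j * a k * sinc (c * ‖x k - x j‖))
      = ∫ y in Metric.ball (0:E3) 1, ∑ j, ∑ k, (a j * a k) * Real.cos (f y k - f y j) := by
    rw [Finset.mul_sum]
    calc ∑ j, (4 * π / 3) * ∑ k, a j * a k * sinc (c * ‖x k - x j‖)
        = ∑ j, ∑ k, (4 * π / 3) * (a j * a k * sinc (c * ‖x k - x j‖)) := by
          refine Finset.sum_congr rfl fun j _ => ?_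
          rw [Finset.mul_sum]
      _ = ∑ j, ∑ k, ∫ y in Metric.ball (0:E3) 1, (a j * a k) * Real.cos (f y k - f y j) := by
          refine Finset.sum_congr rfl fun j _ => Finset.sum_congr rfl fun k _ => hterm j k
      _ = ∑ j, ∫ y in Metric.ball (0:E3) 1, ∑ k, (a j * a k) * Real.cos (f y k - f y j) := by
          refine Finset.sum_congr rfl fun j _ => ?_
          rw [integral_finset_sum _ (fun k _ => hint j k)]
      _ = ∫ y in Metric.ball (0:E3) 1, ∑ j, ∑ k, (a j * a k) * Real.cos (f y k - f y j) := by
          rw [integral_finset_sum _ (fun j _ => integrable_finset_sum _ (fun k _ => hint j k))]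
  have hpt : ∀ y : E3, ∑ j, ∑ k, (a j * a k) * Real.cos (f y k - f y j)
      = (∑ j, a j * Real.cos (f y j)) ^ 2 + (∑ j, a j * Real.sin (f y j)) ^ 2 := by
    intro y
    rw [sq, sq, Finset.sum_mul_sum, Finset.sum_mul_sum, ← Finset.sum_add_distrib]
    refine Finset.sum_congr rfl fun j _ => ?_
    rw [← Finset.sum_add_distrib]
    refine Finset.sum_congr rfl fun k _ => ?_
    rw [Real.cos_sub]
    ring
  have hnn : 0 ≤ ∫ y in Metric.ball (0:E3) 1, ∑ j, ∑ k, (a j * a k) * Real.cos (f y k - f y j) :=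
    setIntegral_nonneg measurableSet_ball (fun y _ => by rw [hpt y]; positivity)
  nlinarith [hsum ▸ hnn]

lemma L4 (Φ : Measure ℝ) [IsFiniteMeasure Φ] (N : ℕ) (x : Fin N → E3) (a : Fin N → ℝ) :
    0 ≤ ∑ j, ∑ k, a j * a k * ∫ l, sinc (l * ‖x k - x j‖) ∂Φ := by
  have hint : ∀ r : ℝ, Integrable (fun l => sinc (l * r)) Φ := by
    intro r
    refine Integrable.mono' (integrable_const (1:ℝ))
      ((measurable_sinc.comp (measurable_id.mul_const r)).aestronglyMeasurable) ?_
    filter_upwards with l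
    rw [Real.norm_eq_abs]
    exact abs_sinc_le_one _
  have h1 : ∀ j k : Fin N, a j * a k * ∫ l, sinc (l * ‖x k - x j‖) ∂Φ
      = ∫ l, a j * a k * sinc (l * ‖x k - x j‖) ∂Φ := fun j k => (integral_const_mul _ _).symm
  calc (0:ℝ) ≤ ∫ l, ∑ j, ∑ k, a j * a k * sinc (l * ‖x k - x j‖) ∂Φ :=
        integral_nonneg (fun l => L3 l N x a)
    _ = ∑ j, ∫ l, ∑ k, a j * a k * sinc (l * ‖x k - x j‖) ∂Φ :=
        integral_finset_sum _ (fun j _ => integrable_finset_sum _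
          (fun k _ => (hint ‖x k - x j‖).const_mul _))
    _ = ∑ j, ∑ k, ∫ l, a j * a k * sinc (l * ‖x k - x j‖) ∂Φ := by
        refine Finset.sum_congr rfl fun j _ => ?_
        rw [integral_finset_sum _ (fun k _ => (hint ‖x k - x j‖).const_mul _)]
    _ = ∑ j, ∑ k, a j * a k * ∫ l, sinc (l * ‖x k - x j‖) ∂Φ := by
        refine Finset.sum_congr rfl fun j _ => Finset.sum_congr rfl fun k _ => (h1 j k).symm

/-- With `C¹ = [[0,0],[0,1]]`, `C² = (1/4)[[1,√3],[√3,3]]`,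
`C³ = (1/4)[[1,−√3],[−√3,3]]`, and finite Borel measures `Φ₁, Φ₂, Φ₃` on `[0,∞)`,
the two-point correlation tensor
`B(x,y) = ∑_m (∫₀^∞ sinc(λ‖y−x‖) dΦ_m(λ)) C^m` is a positive semidefinite
matrix-valued kernel on `ℝ³`. -/
theorem two_component_matern_kernel_posSemidef
    (Φ : Fin 3 → Measure ℝ) (hΦfin : ∀ m, IsFiniteMeasure (Φ m))
    (hΦsupp : ∀ m, Φ m (Set.Iio (0 : ℝ)) = 0)
    (C : Fin 3 → Matrix (Fin 2) (Fin 2) ℝ)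
    (hC : C = ![!![0, 0; 0, 1],
                (1/4 : ℝ) • !![1, Real.sqrt 3; Real.sqrt 3, 3],
                (1/4 : ℝ) • !![1, -Real.sqrt 3; -Real.sqrt 3, 3]])
    (B : EuclideanSpace ℝ (Fin 3) → EuclideanSpace ℝ (Fin 3) → Matrix (Fin 2) (Fin 2) ℝ)
    (hB : ∀ x y, B x y = ∑ m, (∫ l, sinc (l * ‖y - x‖) ∂(Φ m)) • C m) :
    ∀ (N : ℕ) (x : Fin N → EuclideanSpace ℝ (Fin 3)) (c : Fin N → Fin 2 → ℝ),
      0 ≤ ∑ j, ∑ k, c j ⬝ᵥ ((B (x j) (x k)) *ᵥ c k) := by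
  intro N x c
  have h3 : Real.sqrt 3 * Real.sqrt 3 = 3 := Real.mul_self_sqrt (by norm_num)
  set v : Fin 3 → Fin 2 → ℝ :=
    ![![0, 1], ![1/2, Real.sqrt 3 / 2], ![1/2, -(Real.sqrt 3 / 2)]] with hv
  have hCv : ∀ (m : Fin 3) (α β : Fin 2 → ℝ),
      α ⬝ᵥ (C m *ᵥ β) = (v m ⬝ᵥ α) * (v m ⬝ᵥ β) := by
    intro m α β
    fin_cases m
    · simp [hC, hv, Matrix.mulVec, dotProduct, Fin.sum_univ_two]
    · simp [hC, hv, Matrix.mulVec, dotProduct, Fin.sum_univ_two]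
      linear_combination (-(β 1 * α 1) * (1/4)) * h3
    · simp [hC, hv, Matrix.mulVec, dotProduct, Fin.sum_univ_two]
      linear_combination (-(β 1 * α 1) * (1/4)) * h3
  have key : ∀ j k : Fin N, c j ⬝ᵥ (B (x j) (x k) *ᵥ c k)
      = ∑ m, (∫ l, sinc (l * ‖x k - x j‖) ∂(Φ m)) * ((v m ⬝ᵥ c j) * (v m ⬝ᵥ c k)) := by
    intro j k
    rw [hB, Fin.sum_univ_three, Fin.sum_univ_three]
    rw [Matrix.add_mulVec, Matrix.add_mulVec, Matrix.smul_mulVec,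
      Matrix.smul_mulVec, Matrix.smul_mulVec]
    rw [dotProduct_add, dotProduct_add]
    rw [dotProduct_smul, dotProduct_smul, dotProduct_smul]
    rw [hCv 0, hCv 1, hCv 2]
    simp [smul_eq_mul]
  calc (0:ℝ) ≤ ∑ m : Fin 3, ∑ j, ∑ k,
        (v m ⬝ᵥ c j) * (v m ⬝ᵥ c k) * ∫ l, sinc (l * ‖x k - x j‖) ∂(Φ m) := by
        refine Finset.sum_nonneg fun m _ => ?_
        haveI := hΦfin m
        exact L4 (Φ m) N x (fun j => v m ⬝ᵥ c j)
    _ = ∑ j, ∑ k, ∑ m : Fin 3,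
        (v m ⬝ᵥ c j) * (v m ⬝ᵥ c k) * ∫ l, sinc (l * ‖x k - x j‖) ∂(Φ m) := by
        rw [Finset.sum_comm]
        exact Finset.sum_congr rfl fun j _ => Finset.sum_comm
    _ = ∑ j, ∑ k, c j ⬝ᵥ (B (x j) (x k) *ᵥ c k) := by
        refine Finset.sum_congr rfl fun j _ => Finset.sum_congr rfl fun k _ => ?_
        rw [key j k]
        refine Finset.sum_congr rfl fun m _ => ?_
        ring
end
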